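/- arXiv:2305.18765 — 4 statements merged into one kernel-verified Lean document; each statement's English description precedes it below -/
import Mathlib

section
/- Assume f(k,a)=f(k,b)=0 for all k∈[α,β]. There exist constants K₂,K₃,K₄≥0, depending only on a,b,α,β,κ,c₂, the C¹ norm of f, the C² norm of S and the C¹ norm of Q, such that the following holds: for every λ∈(0,c₂] with λ‖∂_u f‖≤1−κ, all k₋,k₊,k♯∈[α,β] and u₋,u₊∈[a,b], setting u♯=½(u₋+u₊)−(λ/2)(f(k₊,u₊)−f(k₋,u₋)) and Ψ=S(k♯,u♯)−½(S(k₋,u₋)+S(k₊,u₊))+(λ/2)(Q(k₊,u₊)−Q(k₋,u₋)), one has |Ψ| ≤ K₂(u₊−u₋)² + K₃|k₊−k₋| + K₄|k♯−½(k₋+k₊)|. No convexity of S is required. -/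
set_option maxHeartbeats 2000000


open MeasureTheory Set

private lemma lip_aux {g g' : ℝ → ℝ} {s : Set ℝ} (hs : Convex ℝ s) {C : ℝ}
    (hd : ∀ x ∈ s, HasDerivAt g (g' x) x)
    (hC : ∀ x ∈ s, |g' x| ≤ C) {x y : ℝ} (hx : x ∈ s) (hy : y ∈ s) :
    |g y - g x| ≤ C * |y - x| := by
  have := hs.norm_image_sub_le_of_norm_hasDerivWithin_le
    (fun z hz => (hd z hz).hasDerivWithinAt) (fun z hz => by simpa using hC z hz) hx hy
  simpa using this

private lemma taylor_aux {g g' g'' : ℝ → ℝ} {a b M : ℝ}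
    (hd : ∀ x ∈ Icc a b, HasDerivAt g (g' x) x)
    (hdd : ∀ x ∈ Icc a b, HasDerivAt g' (g'' x) x)
    (hM : ∀ x ∈ Icc a b, |g'' x| ≤ M)
    {x y : ℝ} (hx : x ∈ Icc a b) (hy : y ∈ Icc a b) :
    |g y - g x - g' x * (y - x)| ≤ M * |y - x| * |y - x| := by
  have hM0 : 0 ≤ M := le_trans (abs_nonneg _) (hM x hx)
  have hsub : Set.uIcc x y ⊆ Icc a b := by
    intro v hv
    rcases le_total x y with h | h
    · rw [Set.uIcc_of_le h] at hv
      exact ⟨le_trans hx.1 hv.1, le_trans hv.2 hy.2⟩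
    · rw [Set.uIcc_of_ge h] at hv
      exact ⟨le_trans hy.1 hv.1, le_trans hv.2 hx.2⟩
  have hlip : ∀ z ∈ Icc a b, |g' z - g' x| ≤ M * |z - x| :=
    fun z hz => lip_aux (convex_Icc a b) hdd hM hx hz
  have key := lip_aux (convex_uIcc x y)
    (g := fun v => g v - g' x * v) (g' := fun v => g' v - g' x)
    (C := M * |y - x|)
    (fun v hv => by
      have := (hd v (hsub hv)).sub (HasDerivAt.const_mul (g' x) (hasDerivAt_id v))
      exact this.congr_deriv (by ring))
    (fun v hv => by
      have h1 := hlip v (hsub hv)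
      have h2 : |v - x| ≤ |y - x| := by
        rcases le_total x y with h | h
        · rw [Set.uIcc_of_le h] at hv
          rw [abs_of_nonneg (by linarith [hv.1] : (0:ℝ) ≤ v - x),
            abs_of_nonneg (by linarith : (0:ℝ) ≤ y - x)]
          linarith [hv.2]
        · rw [Set.uIcc_of_ge h] at hv
          rw [abs_of_nonpos (by linarith [hv.2] : v - x ≤ (0:ℝ)),
            abs_of_nonpos (by linarith : y - x ≤ (0:ℝ))]
          linarith [hv.1]
      calc |g' v - g' x| ≤ M * |v - x| := h1
        _ ≤ M * |y - x| := by nlinarith)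
    (Set.left_mem_uIcc) (Set.right_mem_uIcc)
  have heq : g y - g x - g' x * (y - x) = (g y - g' x * y) - (g x - g' x * x) := by ring
  rw [heq]
  simpa using key

theorem stmt5
    (α β a b : ℝ) (hαβ : α < β) (hab : a < b)
    (f S Q fu fk Su Sk Suu Qu Qk : ℝ → ℝ → ℝ)
    (hfu : ∀ k ∈ Set.Icc α β, ∀ u ∈ Set.Icc a b, HasDerivAt (fun v => f k v) (fu k u) u)
    (hfk : ∀ k ∈ Set.Icc α β, ∀ u ∈ Set.Icc a b, HasDerivAt (fun w => f w u) (fk k u) k)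
    (hSu : ∀ k ∈ Set.Icc α β, ∀ u ∈ Set.Icc a b, HasDerivAt (fun v => S k v) (Su k u) u)
    (hSk : ∀ k ∈ Set.Icc α β, ∀ u ∈ Set.Icc a b, HasDerivAt (fun w => S w u) (Sk k u) k)
    (hSuu : ∀ k ∈ Set.Icc α β, ∀ u ∈ Set.Icc a b, HasDerivAt (fun v => Su k v) (Suu k u) u)
    (hQu : ∀ k ∈ Set.Icc α β, ∀ u ∈ Set.Icc a b, HasDerivAt (fun v => Q k v) (Qu k u) u)
    (hQk : ∀ k ∈ Set.Icc α β, ∀ u ∈ Set.Icc a b, HasDerivAt (fun w => Q w u) (Qk k u) k)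
    (hent : ∀ k ∈ Set.Icc α β, ∀ u ∈ Set.Icc a b, Qu k u = Su k u * fu k u)
    (M Mfu : ℝ)
    (hM : ∀ k ∈ Set.Icc α β, ∀ u ∈ Set.Icc a b,
      |f k u| ≤ M ∧ |fu k u| ≤ M ∧ |fk k u| ≤ M ∧
      |S k u| ≤ M ∧ |Su k u| ≤ M ∧ |Sk k u| ≤ M ∧ |Suu k u| ≤ M ∧
      |Q k u| ≤ M ∧ |Qu k u| ≤ M ∧ |Qk k u| ≤ M)
    (hMfu : ∀ k ∈ Set.Icc α β, ∀ u ∈ Set.Icc a b, |fu k u| ≤ Mfu)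
    (hfab : ∀ k ∈ Set.Icc α β, f k a = 0 ∧ f k b = 0)
    (κ c₂ : ℝ) (hκ : κ ∈ Set.Ioo (0:ℝ) 1) (hc₂ : 0 < c₂)
    :
    ∃ K₂ K₃ K₄ : ℝ, 0 ≤ K₂ ∧ 0 ≤ K₃ ∧ 0 ≤ K₄ ∧
      ∀ lam : ℝ, 0 < lam → lam ≤ c₂ → lam * Mfu ≤ 1 - κ →
      ∀ km ∈ Set.Icc α β, ∀ kp ∈ Set.Icc α β, ∀ ks ∈ Set.Icc α β,
      ∀ um ∈ Set.Icc a b, ∀ up ∈ Set.Icc a b,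
        |S ks ((um + up) / 2 - lam / 2 * (f kp up - f km um))
            - (S km um + S kp up) / 2 + lam / 2 * (Q kp up - Q km um)|
          ≤ K₂ * (up - um) ^ 2 + K₃ * |kp - km| + K₄ * |ks - (km + kp) / 2| := by
  obtain ⟨hκ0, hκ1⟩ := hκ
  have hαm : α ∈ Set.Icc α β := ⟨le_rfl, hαβ.le⟩
  have ham : a ∈ Set.Icc a b := ⟨le_rfl, hab.le⟩
  have hbm : b ∈ Set.Icc a b := ⟨hab.le, le_rfl⟩
  have hM0 : 0 ≤ M := le_trans (abs_nonneg _) (hM α hαm a ham).1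
  have hMfu0 : 0 ≤ Mfu := le_trans (abs_nonneg _) (hMfu α hαm a ham)
  refine ⟨M + c₂ * M ^ 2, M + c₂ * M + c₂ * M ^ 2, M, by positivity, by positivity, hM0, ?_⟩
  intro lam hlam0 hlamc hlamM km hkm kp hkp ks hks um hum up hup
  -- bounds for f from f(k,a)=f(k,b)=0
  have hfb : ∀ k ∈ Set.Icc α β, ∀ u ∈ Set.Icc a b,
      |f k u| ≤ Mfu * (u - a) ∧ |f k u| ≤ Mfu * (b - u) := by
    intro k hk u hu
    constructor
    · have := lip_aux (convex_Icc a b) (hfu k hk) (fun v hv => hMfu k hk v hv) ham hu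
      simpa [(hfab k hk).1, abs_of_nonneg (sub_nonneg.mpr hu.1)] using this
    · have := lip_aux (convex_Icc a b) (hfu k hk) (fun v hv => hMfu k hk v hv) hbm hu
      rw [(hfab k hk).2, sub_zero, abs_of_nonpos (by linarith [hu.2] : u - b ≤ (0:ℝ))] at this
      simpa [neg_sub] using this
  -- shifted midpoint stays in [a,b]
  have hmem : ∀ k1 ∈ Set.Icc α β, ∀ k2 ∈ Set.Icc α β, ∀ u1 ∈ Set.Icc a b, ∀ u2 ∈ Set.Icc a b,
      (u1 + u2) / 2 - lam / 2 * (f k2 u2 - f k1 u1) ∈ Set.Icc a b := by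
    intro k1 hk1 k2 hk2 u1 hu1 u2 hu2
    obtain ⟨c1, c1'⟩ := hfb k1 hk1 u1 hu1
    obtain ⟨d1, d1'⟩ := hfb k2 hk2 u2 hu2
    have e1a : lam * |f k1 u1| ≤ (1 - κ) * (u1 - a) := by
      nlinarith [hu1.1, abs_nonneg (f k1 u1)]
    have e1b : lam * |f k1 u1| ≤ (1 - κ) * (b - u1) := by
      nlinarith [hu1.2, abs_nonneg (f k1 u1)]
    have e2a : lam * |f k2 u2| ≤ (1 - κ) * (u2 - a) := by
      nlinarith [hu2.1, abs_nonneg (f k2 u2)]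
    have e2b : lam * |f k2 u2| ≤ (1 - κ) * (b - u2) := by
      nlinarith [hu2.2, abs_nonneg (f k2 u2)]
    have n1 := neg_abs_le (f k1 u1)
    have l1 := le_abs_self (f k1 u1)
    have n2 := neg_abs_le (f k2 u2)
    have l2 := le_abs_self (f k2 u2)
    constructor
    · nlinarith [mul_nonneg hκ0.le (sub_nonneg.mpr hu1.1),
        mul_nonneg hκ0.le (sub_nonneg.mpr hu2.1)]
    · nlinarith [mul_nonneg hκ0.le (sub_nonneg.mpr hu1.2),
        mul_nonneg hκ0.le (sub_nonneg.mpr hu2.2)]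
  have hkbm : (km + kp) / 2 ∈ Set.Icc α β := by
    obtain ⟨h1, h2⟩ := hkm; obtain ⟨h3, h4⟩ := hkp
    constructor <;> linarith
  have hubm : (um + up) / 2 ∈ Set.Icc a b := by
    obtain ⟨h1, h2⟩ := hum; obtain ⟨h3, h4⟩ := hup
    constructor <;> linarith
  have husm := hmem km hkm kp hkp um hum up hup
  have hutm := hmem ((km + kp) / 2) hkbm ((km + kp) / 2) hkbm um hum up hup
  set kb : ℝ := (km + kp) / 2 with hkb_def
  set us : ℝ := (um + up) / 2 - lam / 2 * (f kp up - f km um) with hus_def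
  set ub : ℝ := (um + up) / 2 with hub_def
  set ut : ℝ := ub - lam / 2 * (f kb up - f kb um) with hut_def
  clear_value ut ub us kb
  -- Lipschitz facts
  have hSlipk : ∀ u ∈ Set.Icc a b, ∀ k1 ∈ Set.Icc α β, ∀ k2 ∈ Set.Icc α β,
      |S k2 u - S k1 u| ≤ M * |k2 - k1| := fun u hu k1 hk1 k2 hk2 =>
    lip_aux (convex_Icc α β) (fun w hw => hSk w hw u hu)
      (fun w hw => (hM w hw u hu).2.2.2.2.2.1) hk1 hk2
  have hQlipk : ∀ u ∈ Set.Icc a b, ∀ k1 ∈ Set.Icc α β, ∀ k2 ∈ Set.Icc α β,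
      |Q k2 u - Q k1 u| ≤ M * |k2 - k1| := fun u hu k1 hk1 k2 hk2 =>
    lip_aux (convex_Icc α β) (fun w hw => hQk w hw u hu)
      (fun w hw => (hM w hw u hu).2.2.2.2.2.2.2.2.2) hk1 hk2
  have hflipk : ∀ u ∈ Set.Icc a b, ∀ k1 ∈ Set.Icc α β, ∀ k2 ∈ Set.Icc α β,
      |f k2 u - f k1 u| ≤ M * |k2 - k1| := fun u hu k1 hk1 k2 hk2 =>
    lip_aux (convex_Icc α β) (fun w hw => hfk w hw u hu)
      (fun w hw => (hM w hw u hu).2.2.1) hk1 hk2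
  have hSlipu : ∀ k ∈ Set.Icc α β, ∀ u1 ∈ Set.Icc a b, ∀ u2 ∈ Set.Icc a b,
      |S k u2 - S k u1| ≤ M * |u2 - u1| := fun k hk u1 hu1 u2 hu2 =>
    lip_aux (convex_Icc a b) (hSu k hk) (fun v hv => (hM k hk v hv).2.2.2.2.1) hu1 hu2
  have hSulipu : ∀ k ∈ Set.Icc α β, ∀ u1 ∈ Set.Icc a b, ∀ u2 ∈ Set.Icc a b,
      |Su k u2 - Su k u1| ≤ M * |u2 - u1| := fun k hk u1 hu1 u2 hu2 =>
    lip_aux (convex_Icc a b) (hSuu k hk) (fun v hv => (hM k hk v hv).2.2.2.2.2.2.1) hu1 hu2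
  have hflipu : ∀ k ∈ Set.Icc α β, ∀ u1 ∈ Set.Icc a b, ∀ u2 ∈ Set.Icc a b,
      |f k u2 - f k u1| ≤ Mfu * |u2 - u1| := fun k hk u1 hu1 u2 hu2 =>
    lip_aux (convex_Icc a b) (hfu k hk) (fun v hv => hMfu k hk v hv) hu1 hu2
  -- Taylor expansions of S kb around ub
  have hT : ∀ y ∈ Set.Icc a b,
      |S kb y - S kb ub - Su kb ub * (y - ub)| ≤ M * |y - ub| * |y - ub| :=
    fun y hy => taylor_aux (hSu kb hkbm) (hSuu kb hkbm)
      (fun v hv => (hM kb hkbm v hv).2.2.2.2.2.2.1) hubm hy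
  -- half-distances
  have hkhalf1 : |kp - kb| = |kp - km| / 2 := by
    rw [show kp - kb = (kp - km) / 2 by rw [hkb_def]; ring, abs_div]; norm_num
  have hkhalf2 : |km - kb| = |kp - km| / 2 := by
    rw [show km - kb = -((kp - km) / 2) by rw [hkb_def]; ring, abs_neg, abs_div]; norm_num
  have huhalf1 : |um - ub| = |up - um| / 2 := by
    rw [show um - ub = -((up - um) / 2) by rw [hub_def]; ring, abs_neg, abs_div]; norm_num
  have huhalf2 : |up - ub| = |up - um| / 2 := by
    rw [show up - ub = (up - um) / 2 by rw [hub_def]; ring, abs_div]; norm_num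
  -- T4 via the modified entropy flux
  have huIcc : Set.uIcc um up ⊆ Set.Icc a b := by
    intro v hv
    rcases le_total um up with h | h
    · rw [Set.uIcc_of_le h] at hv; exact ⟨le_trans hum.1 hv.1, le_trans hv.2 hup.2⟩
    · rw [Set.uIcc_of_ge h] at hv; exact ⟨le_trans hup.1 hv.1, le_trans hv.2 hum.2⟩
  have hmid : ∀ v ∈ Set.uIcc um up, |v - ub| ≤ |up - um| / 2 := by
    intro v hv
    rcases le_total um up with h | h
    · rw [Set.uIcc_of_le h] at hv
      rw [abs_of_nonneg (by linarith : (0:ℝ) ≤ up - um), abs_le]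
      obtain ⟨h1, h2⟩ := hv
      constructor <;> · rw [hub_def]; linarith
    · rw [Set.uIcc_of_ge h] at hv
      rw [abs_of_nonpos (by linarith : up - um ≤ (0:ℝ)), abs_le]
      obtain ⟨h1, h2⟩ := hv
      constructor <;> · rw [hub_def]; linarith
  have hT4 : |(Q kb up - Su kb ub * f kb up) - (Q kb um - Su kb ub * f kb um)|
      ≤ M * (|up - um| / 2) * M * |up - um| := by
    have := lip_aux (convex_uIcc um up)
      (g := fun v => Q kb v - Su kb ub * f kb v)
      (g' := fun v => (Su kb v - Su kb ub) * fu kb v)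
      (C := M * (|up - um| / 2) * M)
      (fun v hv => by
        have hv' := huIcc hv
        have h1 := (hQu kb hkbm v hv').sub
          (HasDerivAt.const_mul (Su kb ub) (hfu kb hkbm v hv'))
        exact h1.congr_deriv (by rw [hent kb hkbm v hv']; ring))
      (fun v hv => by
        have hv' := huIcc hv
        have h1 := hSulipu kb hkbm ub hubm v hv'
        have h2 := hmid v hv
        have h3 := (hM kb hkbm v hv').2.1
        calc |(Su kb v - Su kb ub) * fu kb v| = |Su kb v - Su kb ub| * |fu kb v| := abs_mul _ _
          _ ≤ M * (|up - um| / 2) * M := by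
              apply mul_le_mul _ h3 (abs_nonneg _) (by positivity)
              calc |Su kb v - Su kb ub| ≤ M * |v - ub| := h1
                _ ≤ M * (|up - um| / 2) := by nlinarith [abs_nonneg (v - ub)])
      Set.left_mem_uIcc Set.right_mem_uIcc
    simpa using this
  -- key algebraic decomposition
  have key : S ks us - (S km um + S kp up) / 2 + lam / 2 * (Q kp up - Q km um)
      = (S ks us - S kb us) + (S kb us - S kb ut)
        + ((S kb um - S km um) + (S kb up - S kp up)) / 2
        + lam / 2 * ((Q kp up - Q kb up) - (Q km um - Q kb um))
        + ((S kb ut - S kb ub - Su kb ub * (ut - ub))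
           - (S kb um - S kb ub - Su kb ub * (um - ub)) / 2
           - (S kb up - S kb ub - Su kb ub * (up - ub)) / 2
           + lam / 2 * ((Q kb up - Su kb ub * f kb up) - (Q kb um - Su kb ub * f kb um))) := by
    rw [hut_def, hub_def]; ring
  -- piecewise bounds
  have c1 : |S ks us - S kb us| ≤ M * |ks - kb| := hSlipk us husm kb hkbm ks hks
  have husut : |us - ut| ≤ lam * M * |kp - km| / 2 := by
    have h1 := hflipk up hup kb hkbm kp hkp
    have h2 := hflipk um hum kb hkbm km hkm
    rw [hkhalf1] at h1; rw [hkhalf2] at h2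
    have heq : us - ut = -(lam / 2) * ((f kp up - f kb up) - (f km um - f kb um)) := by
      rw [hus_def, hut_def, hub_def]; ring
    rw [heq, abs_mul, abs_neg, abs_of_nonneg (by positivity : (0:ℝ) ≤ lam / 2)]
    calc lam / 2 * |(f kp up - f kb up) - (f km um - f kb um)|
        ≤ lam / 2 * (|f kp up - f kb up| + |f km um - f kb um|) := by
          apply mul_le_mul_of_nonneg_left _ (by positivity)
          exact (abs_sub _ _)
      _ ≤ lam * M * |kp - km| / 2 := by nlinarith
  have c2 : |S kb us - S kb ut| ≤ c₂ * M ^ 2 / 2 * |kp - km| := by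
    have h1 := hSlipu kb hkbm ut hutm us husm
    have h2 : M * |us - ut| ≤ c₂ * M ^ 2 / 2 * |kp - km| := by
      have h2a : M * |us - ut| ≤ M * (lam * M * |kp - km| / 2) :=
        mul_le_mul_of_nonneg_left husut hM0
      have h2b : (0:ℝ) ≤ (c₂ - lam) * (M * M) * |kp - km| :=
        mul_nonneg (mul_nonneg (sub_nonneg.mpr hlamc) (mul_nonneg hM0 hM0)) (abs_nonneg _)
      nlinarith [h2a, h2b]
    calc |S kb us - S kb ut| ≤ M * |us - ut| := h1
      _ ≤ _ := h2
  have c3 : |((S kb um - S km um) + (S kb up - S kp up)) / 2| ≤ M / 2 * |kp - km| := by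
    have h1 := hSlipk um hum km hkm kb hkbm
    have h2 := hSlipk up hup kp hkp kb hkbm
    rw [abs_sub_comm kb km, hkhalf2] at h1
    rw [abs_sub_comm kb kp, hkhalf1] at h2
    rw [abs_div, abs_two]
    have := (abs_add_le (S kb um - S km um) (S kb up - S kp up))
    linarith
  have c4 : |lam / 2 * ((Q kp up - Q kb up) - (Q km um - Q kb um))| ≤ c₂ * M / 2 * |kp - km| := by
    have h1 := hQlipk up hup kb hkbm kp hkp
    have h2 := hQlipk um hum kb hkbm km hkm
    rw [hkhalf1] at h1; rw [hkhalf2] at h2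
    rw [abs_mul, abs_of_nonneg (by positivity : (0:ℝ) ≤ lam / 2)]
    have h3 := abs_sub (Q kp up - Q kb up) (Q km um - Q kb um)
    have h4 : |(Q kp up - Q kb up) - (Q km um - Q kb um)| ≤ M * |kp - km| := by linarith
    calc lam / 2 * |(Q kp up - Q kb up) - (Q km um - Q kb um)|
        ≤ lam / 2 * (M * |kp - km|) := mul_le_mul_of_nonneg_left h4 (by positivity)
      _ ≤ c₂ * M / 2 * |kp - km| := by
          nlinarith [mul_nonneg (mul_nonneg (sub_nonneg.mpr hlamc) hM0) (abs_nonneg (kp - km))]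
  -- core bounds
  have hutub : |ut - ub| ≤ |up - um| / 2 := by
    have h1 := hflipu kb hkbm um hum up hup
    have heq : ut - ub = -(lam / 2) * (f kb up - f kb um) := by rw [hut_def]; ring
    rw [heq, abs_mul, abs_neg, abs_of_nonneg (by positivity : (0:ℝ) ≤ lam / 2)]
    nlinarith [abs_nonneg (f kb up - f kb um), abs_nonneg (up - um),
      mul_nonneg (sub_nonneg.mpr hlamM) (abs_nonneg (up - um)),
      mul_nonneg hκ0.le (abs_nonneg (up - um)),
      mul_le_mul_of_nonneg_left h1 (by positivity : (0:ℝ) ≤ lam / 2)]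
  have h3 : |up - um| * |up - um| = (up - um) ^ 2 := by rw [← sq_abs]; ring
  have h4 : M * (|up - um| / 2) * (|up - um| / 2) = M / 4 * (up - um) ^ 2 := by
    rw [show M * (|up - um| / 2) * (|up - um| / 2) = M / 4 * (|up - um| * |up - um|) by ring, h3]
  have e1 : |S kb ut - S kb ub - Su kb ub * (ut - ub)| ≤ M / 4 * (up - um) ^ 2 := by
    have h1 := hT ut hutm
    have h2 : |ut - ub| * |ut - ub| ≤ (|up - um| / 2) * (|up - um| / 2) :=
      mul_le_mul hutub hutub (abs_nonneg _) (by positivity)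
    have h2' := mul_le_mul_of_nonneg_left h2 hM0
    calc |S kb ut - S kb ub - Su kb ub * (ut - ub)| ≤ M * |ut - ub| * |ut - ub| := h1
      _ ≤ M * (|up - um| / 2) * (|up - um| / 2) := by linarith [h2']
      _ = M / 4 * (up - um) ^ 2 := h4
  have e2 : |S kb um - S kb ub - Su kb ub * (um - ub)| ≤ M / 4 * (up - um) ^ 2 := by
    have h1 := hT um hum
    rw [huhalf1] at h1
    rw [← h4]; exact h1
  have e3 : |S kb up - S kb ub - Su kb ub * (up - ub)| ≤ M / 4 * (up - um) ^ 2 := by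
    have h1 := hT up hup
    rw [huhalf2] at h1
    rw [← h4]; exact h1
  have e4 : |lam / 2 * ((Q kb up - Su kb ub * f kb up) - (Q kb um - Su kb ub * f kb um))|
      ≤ c₂ * M ^ 2 / 4 * (up - um) ^ 2 := by
    rw [abs_mul, abs_of_nonneg (by positivity : (0:ℝ) ≤ lam / 2)]
    have h5 : |(Q kb up - Su kb ub * f kb up) - (Q kb um - Su kb ub * f kb um)|
        ≤ M ^ 2 / 2 * (up - um) ^ 2 := by
      calc |(Q kb up - Su kb ub * f kb up) - (Q kb um - Su kb ub * f kb um)|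
          ≤ M * (|up - um| / 2) * M * |up - um| := hT4
        _ = M ^ 2 / 2 * (|up - um| * |up - um|) := by ring
        _ = M ^ 2 / 2 * (up - um) ^ 2 := by rw [h3]
    calc lam / 2 * |(Q kb up - Su kb ub * f kb up) - (Q kb um - Su kb ub * f kb um)|
        ≤ lam / 2 * (M ^ 2 / 2 * (up - um) ^ 2) := mul_le_mul_of_nonneg_left h5 (by positivity)
      _ ≤ c₂ * M ^ 2 / 4 * (up - um) ^ 2 := by
          nlinarith [mul_nonneg (mul_nonneg (sub_nonneg.mpr hlamc) (mul_nonneg hM0 hM0))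
            (sq_nonneg (up - um))]
  have c5 : |(S kb ut - S kb ub - Su kb ub * (ut - ub))
       - (S kb um - S kb ub - Su kb ub * (um - ub)) / 2
       - (S kb up - S kb ub - Su kb ub * (up - ub)) / 2
       + lam / 2 * ((Q kb up - Su kb ub * f kb up) - (Q kb um - Su kb ub * f kb um))|
      ≤ (M / 2 + c₂ * M ^ 2 / 4) * (up - um) ^ 2 := by
    have t1 := abs_add_le ((S kb ut - S kb ub - Su kb ub * (ut - ub))
       - (S kb um - S kb ub - Su kb ub * (um - ub)) / 2
       - (S kb up - S kb ub - Su kb ub * (up - ub)) / 2)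
       (lam / 2 * ((Q kb up - Su kb ub * f kb up) - (Q kb um - Su kb ub * f kb um)))
    have t2 := abs_sub ((S kb ut - S kb ub - Su kb ub * (ut - ub))
       - (S kb um - S kb ub - Su kb ub * (um - ub)) / 2)
       ((S kb up - S kb ub - Su kb ub * (up - ub)) / 2)
    have t3 := abs_sub (S kb ut - S kb ub - Su kb ub * (ut - ub))
       ((S kb um - S kb ub - Su kb ub * (um - ub)) / 2)
    have d2 : |(S kb um - S kb ub - Su kb ub * (um - ub)) / 2| ≤ M / 8 * (up - um) ^ 2 := by
      rw [abs_div, abs_two]; linarith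
    have d3 : |(S kb up - S kb ub - Su kb ub * (up - ub)) / 2| ≤ M / 8 * (up - um) ^ 2 := by
      rw [abs_div, abs_two]; linarith
    linarith
  -- assemble
  rw [key]
  have tri : ∀ A B C D E : ℝ, |A + B + C + D + E| ≤ |A| + |B| + |C| + |D| + |E| := by
    intro A B C D E
    calc |A + B + C + D + E| ≤ |A + B + C + D| + |E| := abs_add_le _ _
      _ ≤ (|A + B + C| + |D|) + |E| := by gcongr; exact abs_add_le _ _
      _ ≤ ((|A + B| + |C|) + |D|) + |E| := by gcongr; exact abs_add_le _ _
      _ ≤ |A| + |B| + |C| + |D| + |E| := by gcongr; exact abs_add_le _ _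
  refine le_trans (tri _ _ _ _ _) ?_
  have hk0 : (0:ℝ) ≤ |kp - km| := abs_nonneg _
  have hsq0 : (0:ℝ) ≤ (up - um) ^ 2 := sq_nonneg _
  nlinarith [c1, c2, c3, c4, c5, mul_nonneg hM0 hk0, mul_nonneg (mul_nonneg hc₂.le hM0) hk0,
    mul_nonneg (mul_nonneg hc₂.le (mul_nonneg hM0 hM0)) hk0,
    mul_nonneg hM0 hsq0, mul_nonneg (mul_nonneg hc₂.le (mul_nonneg hM0 hM0)) hsq0]
end

section
/- For all v,w∈[a,b] and all k∈[α,β], (w−v)(Q(k,w)−Q(k,v)) − (S(k,w)−S(k,v))(f(k,w)−f(k,v)) ≥ C_{f,S} |w−v|^{p_f+p_S+2}, where C_{f,S} = C_f·C_S / ((1+p_f+p_S)(2+p_f+p_S)). -/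
open MeasureTheory Set intervalIntegral

private lemma key8
    (a b : ℝ) (f S Q fu Su : ℝ → ℝ)
    (hfu : ∀ u ∈ Set.Icc a b, HasDerivAt f (fu u) u)
    (hSu : ∀ u ∈ Set.Icc a b, HasDerivAt S (Su u) u)
    (hQu : ∀ u ∈ Set.Icc a b, HasDerivAt Q (Su u * fu u) u)
    (hfuc : ContinuousOn fu (Set.Icc a b))
    (hSuc : ContinuousOn Su (Set.Icc a b))
    (Cf CS pf pS : ℝ) (hCf : 0 < Cf) (hCS : 0 < CS) (hpf : 1 ≤ pf) (hpS : 1 ≤ pS)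
    (hGNf : ∀ w v : ℝ, a ≤ w → w < v → v ≤ b → Cf * (v - w) ^ pf ≤ fu v - fu w)
    (hGNS : ∀ w v : ℝ, a ≤ w → w < v → v ≤ b → CS * (v - w) ^ pS ≤ Su v - Su w)
    (v w : ℝ) (hv : v ∈ Set.Icc a b) (hw : w ∈ Set.Icc a b) (hvw : v < w) :
    Cf * CS / ((1 + pf + pS) * (2 + pf + pS)) * (w - v) ^ (pf + pS + 2)
      ≤ (w - v) * (Q w - Q v) - (S w - S v) * (f w - f v) := by
  set p := pf + pS with hp
  have hp2 : 2 ≤ p := by rw [hp]; linarith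
  have hp0 : 0 ≤ p := by linarith
  -- continuity of f, S, Q on Icc a b
  have hfc : ContinuousOn f (Set.Icc a b) := fun x hx => (hfu x hx).continuousAt.continuousWithinAt
  have hSc : ContinuousOn S (Set.Icc a b) := fun x hx => (hSu x hx).continuousAt.continuousWithinAt
  have hQc : ContinuousOn Q (Set.Icc a b) := fun x hx => (hQu x hx).continuousAt.continuousWithinAt
  set E : ℝ → ℝ := fun u => (Q u - Q v) + (u - v) * (Su u * fu u)
      - Su u * (f u - f v) - (S u - S v) * fu u with hE
  -- Step C : lower bound on E u
  have stepC : ∀ u ∈ Set.Icc a b, v ≤ u →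
      Cf * CS * (u - v) ^ (p + 1) / (p + 1) ≤ E u := by
    intro u hu hvu
    have hsub : Set.uIcc v u ⊆ Set.Icc a b := by
      rw [Set.uIcc_of_le hvu]; exact Set.Icc_subset_Icc hv.1 hu.2
    have hfi : IntervalIntegrable fu volume v u :=
      (hfuc.mono hsub).intervalIntegrable
    have hSi : IntervalIntegrable Su volume v u :=
      (hSuc.mono hsub).intervalIntegrable
    have hprodc : ContinuousOn (fun t => (Su u - Su t) * (fu u - fu t)) (Set.uIcc v u) :=
      ((continuousOn_const.sub (hSuc.mono hsub)).mul
        (continuousOn_const.sub (hfuc.mono hsub)))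
    have hprodi : IntervalIntegrable (fun t => (Su u - Su t) * (fu u - fu t)) volume v u :=
      hprodc.intervalIntegrable
    -- FTC identities
    have hfint : ∫ t in v..u, fu t = f u - f v :=
      integral_eq_sub_of_hasDerivAt (fun t ht => hfu t (hsub ht)) hfi
    have hSint : ∫ t in v..u, Su t = S u - S v :=
      integral_eq_sub_of_hasDerivAt (fun t ht => hSu t (hsub ht)) hSi
    have hQint : ∫ t in v..u, Su t * fu t = Q u - Q v :=
      integral_eq_sub_of_hasDerivAt (fun t ht => hQu t (hsub ht))
        (((hSuc.mono hsub).mul (hfuc.mono hsub)).intervalIntegrable)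
    -- E u as an integral
    have stepA : E u = ∫ t in v..u, (Su u - Su t) * (fu u - fu t) := by
      have expand : ∀ t : ℝ, (Su u - Su t) * (fu u - fu t)
          = Su u * fu u - Su u * fu t - Su t * fu u + Su t * fu t := by
        intro t; ring
      have Ic : IntervalIntegrable (fun _ : ℝ => Su u * fu u) volume v u :=
        intervalIntegrable_const
      have I1 : IntervalIntegrable (fun t => Su u * fu t) volume v u := hfi.const_mul _
      have I2 : IntervalIntegrable (fun t => Su t * fu u) volume v u := hSi.mul_const _
      have I3 : IntervalIntegrable (fun t => Su t * fu t) volume v u :=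
        ((hSuc.mono hsub).mul (hfuc.mono hsub)).intervalIntegrable
      have i1 : ∫ t in v..u, Su u * fu t = Su u * (f u - f v) := by
        rw [intervalIntegral.integral_const_mul, hfint]
      have i2 : ∫ t in v..u, Su t * fu u = (S u - S v) * fu u := by
        rw [intervalIntegral.integral_mul_const, hSint]
      have i3 : (∫ _ in v..u, Su u * fu u) = (u - v) * (Su u * fu u) := by
        rw [intervalIntegral.integral_const]; simp [smul_eq_mul]
      rw [intervalIntegral.integral_congr (fun t _ => expand t),
        intervalIntegral.integral_add ((Ic.sub I1).sub I2) I3,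
        intervalIntegral.integral_sub (Ic.sub I1) I2,
        intervalIntegral.integral_sub Ic I1, i1, i2, i3, hQint]
      simp only [hE]
      ring
    -- pointwise lower bound
    have stepB : ∀ t ∈ Set.Icc v u, Cf * CS * (u - t) ^ p ≤ (Su u - Su t) * (fu u - fu t) := by
      intro t ht
      rcases eq_or_lt_of_le ht.2 with h | h
      · subst h
        rw [sub_self, Real.zero_rpow (by linarith), mul_zero, sub_self, zero_mul]
      · have hat : a ≤ t := le_trans hv.1 ht.1
        have hub : u ≤ b := hu.2
        have hGf := hGNf t u hat h hub
        have hGS := hGNS t u hat h hub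
        have hpow : (0:ℝ) < u - t := by linarith
        have h1 : (0:ℝ) ≤ Cf * (u - t) ^ pf :=
          mul_nonneg hCf.le (Real.rpow_nonneg hpow.le _)
        have h2 : (0:ℝ) ≤ Su u - Su t :=
          le_trans (mul_nonneg hCS.le (Real.rpow_nonneg hpow.le _)) hGS
        calc Cf * CS * (u - t) ^ p
            = (Su u - Su u) * 0 + (CS * (u - t) ^ pS) * (Cf * (u - t) ^ pf) := by
              rw [hp, Real.rpow_add hpow]; ring
          _ ≤ (Su u - Su t) * (fu u - fu t) := by
              rw [sub_self, zero_mul, zero_add]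
              exact mul_le_mul hGS hGf h1 h2
    -- compare integrals
    have hlowc : Continuous (fun t : ℝ => Cf * CS * (u - t) ^ p) := by
      exact continuous_const.mul ((Real.continuous_rpow_const hp0).comp
        (continuous_const.sub continuous_id))
    have hmono := intervalIntegral.integral_mono_on hvu (hlowc.intervalIntegrable v u) hprodi stepB
    have hcomp : ∫ t in v..u, Cf * CS * (u - t) ^ p
        = Cf * CS * (u - v) ^ (p + 1) / (p + 1) := by
      rw [intervalIntegral.integral_const_mul]
      have := intervalIntegral.integral_comp_sub_left (fun x : ℝ => x ^ p) u (a := v) (b := u)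
      rw [this, sub_self, integral_rpow (Or.inl (by linarith)),
        Real.zero_rpow (by linarith)]
      ring
    rw [stepA, ← hcomp]; exact hmono
  -- Step D : derivative of G
  set G : ℝ → ℝ := fun x => (x - v) * (Q x - Q v) - (S x - S v) * (f x - f v) with hG
  have stepD : ∀ u ∈ Set.Icc a b, HasDerivAt G (E u) u := by
    intro u hu
    have h1 : HasDerivAt (fun x => (x - v) * (Q x - Q v))
        (1 * (Q u - Q v) + (u - v) * (Su u * fu u)) u :=
      ((hasDerivAt_id u).sub_const v).mul ((hQu u hu).sub_const (Q v))
    have h2 : HasDerivAt (fun x => (S x - S v) * (f x - f v))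
        (Su u * (f u - f v) + (S u - S v) * fu u) u :=
      ((hSu u hu).sub_const (S v)).mul ((hfu u hu).sub_const (f v))
    have := h1.sub h2
    have hEu : E u = 1 * (Q u - Q v) + (u - v) * (Su u * fu u)
        - (Su u * (f u - f v) + (S u - S v) * fu u) := by
      rw [hE]; ring
    rw [hEu]; exact this
  -- Step E : integrate
  have hsubw : Set.uIcc v w ⊆ Set.Icc a b := by
    rw [Set.uIcc_of_le hvw.le]; exact Set.Icc_subset_Icc hv.1 hw.2
  have hEc : ContinuousOn E (Set.uIcc v w) := by
    have hfc' := hfc.mono hsubw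
    have hSc' := hSc.mono hsubw
    have hQc' := hQc.mono hsubw
    have hfuc' := hfuc.mono hsubw
    have hSuc' := hSuc.mono hsubw
    rw [hE]
    exact (((hQc'.sub continuousOn_const).add
      ((continuousOn_id.sub continuousOn_const).mul (hSuc'.mul hfuc'))).sub
      (hSuc'.mul (hfc'.sub continuousOn_const))).sub
      ((hSc'.sub continuousOn_const).mul hfuc')
  have hEi : IntervalIntegrable E volume v w := hEc.intervalIntegrable
  have hGint : ∫ u in v..w, E u = G w - G v :=
    integral_eq_sub_of_hasDerivAt (fun u hu => stepD u (hsubw hu)) hEi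
  have hlow2c : Continuous (fun u : ℝ => Cf * CS * (u - v) ^ (p + 1) / (p + 1)) := by
    have : Continuous (fun u : ℝ => (u - v) ^ (p+1)) :=
      (Real.continuous_rpow_const (by linarith)).comp (continuous_id.sub continuous_const)
    continuity
  have hmono2 := intervalIntegral.integral_mono_on hvw.le (hlow2c.intervalIntegrable v w) hEi
    (fun u hu => stepC u (Set.Icc_subset_Icc hv.1 hw.2 hu) hu.1)
  have hcomp2 : ∫ u in v..w, Cf * CS * (u - v) ^ (p + 1) / (p + 1)
      = Cf * CS / ((p + 1) * (p + 2)) * (w - v) ^ (p + 2) := by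
    have heq : ∀ u : ℝ, Cf * CS * (u - v) ^ (p+1) / (p+1)
        = (Cf * CS / (p+1)) * (u - v) ^ (p+1) := fun u => by ring
    rw [intervalIntegral.integral_congr (fun u _ => heq u),
      intervalIntegral.integral_const_mul]
    have := intervalIntegral.integral_comp_sub_right (fun x : ℝ => x ^ (p+1)) v (a := v) (b := w)
    rw [this, sub_self, integral_rpow (Or.inl (by linarith)),
      Real.zero_rpow (by linarith)]
    have hne1 : p + 1 ≠ 0 := by linarith
    have hne2 : p + 1 + 1 ≠ 0 := by linarith
    field_simp
    ring_nf
  have hGv : G v = 0 := by rw [hG]; simp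
  have hconst : Cf * CS / ((1 + pf + pS) * (2 + pf + pS)) = Cf * CS / ((p + 1) * (p + 2)) := by
    rw [hp]; ring_nf
  have hexp : pf + pS + 2 = p + 2 := by rw [hp]
  rw [hconst, hexp]
  calc Cf * CS / ((p + 1) * (p + 2)) * (w - v) ^ (p + 2)
      = ∫ u in v..w, Cf * CS * (u - v) ^ (p + 1) / (p + 1) := (hcomp2).symm
    _ ≤ ∫ u in v..w, E u := hmono2
    _ = G w - G v := hGint
    _ = (w - v) * (Q w - Q v) - (S w - S v) * (f w - f v) := by rw [hGv, hG]; ring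

theorem stmt8
    (α β a b : ℝ) (hαβ : α < β) (hab : a < b)
    (f S Q fu Su Qu : ℝ → ℝ → ℝ)
    (hfu : ∀ k ∈ Set.Icc α β, ∀ u ∈ Set.Icc a b, HasDerivAt (fun v => f k v) (fu k u) u)
    (hSu : ∀ k ∈ Set.Icc α β, ∀ u ∈ Set.Icc a b, HasDerivAt (fun v => S k v) (Su k u) u)
    (hQu : ∀ k ∈ Set.Icc α β, ∀ u ∈ Set.Icc a b, HasDerivAt (fun v => Q k v) (Qu k u) u)
    (hfuc : ∀ k ∈ Set.Icc α β, ContinuousOn (fun u => fu k u) (Set.Icc a b))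
    (hSuc : ∀ k ∈ Set.Icc α β, ContinuousOn (fun u => Su k u) (Set.Icc a b))
    (hent : ∀ k ∈ Set.Icc α β, ∀ u ∈ Set.Icc a b, Qu k u = Su k u * fu k u)
    (Cf CS pf pS : ℝ) (hCf : 0 < Cf) (hCS : 0 < CS) (hpf : 1 ≤ pf) (hpS : 1 ≤ pS)
    (hGNf : ∀ k ∈ Set.Icc α β, ∀ w v : ℝ, a ≤ w → w < v → v ≤ b →
      Cf * (v - w) ^ pf ≤ fu k v - fu k w)
    (hGNS : ∀ k ∈ Set.Icc α β, ∀ w v : ℝ, a ≤ w → w < v → v ≤ b →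
      CS * (v - w) ^ pS ≤ Su k v - Su k w) :
    ∀ k ∈ Set.Icc α β, ∀ v ∈ Set.Icc a b, ∀ w ∈ Set.Icc a b,
      Cf * CS / ((1 + pf + pS) * (2 + pf + pS)) * |w - v| ^ (pf + pS + 2)
        ≤ (w - v) * (Q k w - Q k v) - (S k w - S k v) * (f k w - f k v) := by
  intro k hk v hv w hw
  have hQ' : ∀ u ∈ Set.Icc a b, HasDerivAt (fun x => Q k x) (Su k u * fu k u) u :=
    fun u hu => (hent k hk u hu) ▸ hQu k hk u hu
  have key := key8 a b (f k) (S k) (Q k) (fu k) (Su k)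
    (hfu k hk) (hSu k hk) hQ' (hfuc k hk) (hSuc k hk)
    Cf CS pf pS hCf hCS hpf hpS (hGNf k hk) (hGNS k hk)
  rcases lt_trichotomy v w with h | h | h
  · rw [abs_of_pos (by linarith : (0:ℝ) < w - v)]
    exact key v w hv hw h
  · subst h
    rw [sub_self, abs_zero, Real.zero_rpow (by linarith), mul_zero]
    simp
  · have e1 : |w - v| ^ (pf + pS + 2) = (v - w) ^ (pf + pS + 2) := by
      rw [abs_sub_comm, abs_of_pos (by linarith : (0:ℝ) < v - w)]
    have e2 : (w - v) * (Q k w - Q k v) - (S k w - S k v) * (f k w - f k v)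
        = (v - w) * (Q k v - Q k w) - (S k v - S k w) * (f k v - f k w) := by ring
    rw [e1, e2]
    exact key w v hw hv h
end

section
/- Suppose f∈C²([α,β]×[a,b]) with ∂²_{uu}f(k,ξ)≥γ>0 for all (k,ξ)∈[α,β]×[a,b], and let Q∈C¹ satisfy ∂_u Q(k,u)=(∂_u f(k,u))² (the entropy flux corresponding to the entropy S=f). Then for all v,w∈[a,b] and all k∈[α,β], (w−v)(Q(k,w)−Q(k,v)) − (f(k,w)−f(k,v))² ≥ (γ²/12)|w−v|⁴. -/
open MeasureTheory Set

private lemma mono_aux {F F' : ℝ → ℝ} {v w : ℝ}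
    (hd : ∀ x ∈ Set.Icc v w, HasDerivAt F (F' x) x)
    (h0 : ∀ x ∈ Set.Icc v w, 0 ≤ F' x) (hvw : v ≤ w) : F v ≤ F w := by
  have hc : ContinuousOn F (Set.Icc v w) :=
    fun x hx => (hd x hx).continuousAt.continuousWithinAt
  have hmono : MonotoneOn F (Set.Icc v w) := by
    apply monotoneOn_of_deriv_nonneg (convex_Icc v w) hc
    · intro x hx
      rw [interior_Icc] at hx
      exact (hd x (Set.Ioo_subset_Icc_self hx)).differentiableAt.differentiableWithinAt
    · intro x hx
      rw [interior_Icc] at hx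
      rw [(hd x (Set.Ioo_subset_Icc_self hx)).deriv]
      exact h0 x (Set.Ioo_subset_Icc_self hx)
  exact hmono (Set.left_mem_Icc.2 hvw) (Set.right_mem_Icc.2 hvw) hvw

private lemma key (a b γ : ℝ) (hγ : 0 < γ) (f Q fu fuu : ℝ → ℝ)
    (hfu : ∀ u ∈ Set.Icc a b, HasDerivAt f (fu u) u)
    (hfuu : ∀ u ∈ Set.Icc a b, HasDerivAt fu (fuu u) u)
    (hconv : ∀ u ∈ Set.Icc a b, γ ≤ fuu u)
    (hQu : ∀ u ∈ Set.Icc a b, HasDerivAt Q ((fu u) ^ 2) u)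
    (v w : ℝ) (hv : v ∈ Set.Icc a b) (hw : w ∈ Set.Icc a b) (hvw : v ≤ w) :
    γ ^ 2 / 12 * (w - v) ^ 4 ≤ (w - v) * (Q w - Q v) - (f w - f v) ^ 2 := by
  have hsub : Set.Icc v w ⊆ Set.Icc a b := Set.Icc_subset_Icc hv.1 hw.2
  -- Step 1
  set G : ℝ → ℝ := fun x => (x - v) * fu x - (f x - f v) - γ / 2 * (x - v) ^ 2 with hGdef
  have hGd : ∀ x ∈ Set.Icc v w, HasDerivAt G ((x - v) * (fuu x - γ)) x := by
    intro x hx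
    have hx' := hsub hx
    have h1 : HasDerivAt (fun x => (x - v) * fu x) (1 * fu x + (x - v) * fuu x) x :=
      ((hasDerivAt_id x).sub_const v).mul (hfuu x hx')
    have h2 : HasDerivAt (fun x => f x - f v) (fu x) x := (hfu x hx').sub_const (f v)
    have h3 : HasDerivAt (fun x => γ / 2 * (x - v) ^ 2)
        (γ / 2 * ((2 : ℕ) * (x - v) ^ 1 * 1)) x :=
      (((hasDerivAt_id x).sub_const v).pow 2).const_mul (γ / 2)
    have := (h1.sub h2).sub h3
    refine this.congr_deriv ?_
    push_cast
    ring
  have hG : ∀ x ∈ Set.Icc v w, 0 ≤ G x := by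
    intro x hx
    have hGv : G v = 0 := by simp [hGdef]
    have := mono_aux (F := G) (F' := fun x => (x - v) * (fuu x - γ))
      (v := v) (w := x)
      (fun y hy => hGd y (Set.Icc_subset_Icc le_rfl hx.2 hy))
      (fun y hy => by
        have h1 : γ ≤ fuu y := hconv y (hsub (Set.Icc_subset_Icc le_rfl hx.2 hy))
        have h2 : v ≤ y := hy.1
        show (0:ℝ) ≤ (y - v) * (fuu y - γ)
        nlinarith) hx.1
    linarith
  -- Step 2
  set F1 : ℝ → ℝ := fun x => (Q x - Q v) + (x - v) * (fu x) ^ 2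
      - 2 * (f x - f v) * fu x - γ ^ 2 / 3 * (x - v) ^ 3 with hF1def
  have hF1d : ∀ x ∈ Set.Icc v w,
      HasDerivAt F1 (2 * fuu x * ((x - v) * fu x - (f x - f v)) - γ ^ 2 * (x - v) ^ 2) x := by
    intro x hx
    have hx' := hsub hx
    have h1 : HasDerivAt (fun x => Q x - Q v) ((fu x) ^ 2) x := (hQu x hx').sub_const (Q v)
    have h2 : HasDerivAt (fun x => (x - v) * (fu x) ^ 2)
        (1 * (fu x) ^ 2 + (x - v) * ((2 : ℕ) * fu x ^ 1 * fuu x)) x :=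
      ((hasDerivAt_id x).sub_const v).mul ((hfuu x hx').pow 2)
    have h3 : HasDerivAt (fun x => 2 * (f x - f v) * fu x)
        (2 * fu x * fu x + 2 * (f x - f v) * fuu x) x := by
      have := (((hfu x hx').sub_const (f v)).const_mul 2).mul (hfuu x hx')
      exact this
    have h4 : HasDerivAt (fun x => γ ^ 2 / 3 * (x - v) ^ 3)
        (γ ^ 2 / 3 * ((3 : ℕ) * (x - v) ^ 2 * 1)) x :=
      (((hasDerivAt_id x).sub_const v).pow 3).const_mul (γ ^ 2 / 3)
    have := ((h1.add h2).sub h3).sub h4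
    refine this.congr_deriv ?_
    push_cast
    ring
  have hF1 : ∀ x ∈ Set.Icc v w, 0 ≤ F1 x := by
    intro x hx
    have hF1v : F1 v = 0 := by simp [hF1def]
    have := mono_aux (F := F1)
      (F' := fun x => 2 * fuu x * ((x - v) * fu x - (f x - f v)) - γ ^ 2 * (x - v) ^ 2)
      (v := v) (w := x)
      (fun y hy => hF1d y (Set.Icc_subset_Icc le_rfl hx.2 hy))
      (fun y hy => by
        have hy' : y ∈ Set.Icc v w := Set.Icc_subset_Icc le_rfl hx.2 hy
        have h1 : γ ≤ fuu y := hconv y (hsub hy')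
        have h2 := hG y hy'
        simp only [hGdef] at h2
        show (0:ℝ) ≤ 2 * fuu y * ((y - v) * fu y - (f y - f v)) - γ ^ 2 * (y - v) ^ 2
        have hA0 : 0 ≤ (y - v) * fu y - (f y - f v) := by nlinarith [sq_nonneg (y - v)]
        nlinarith [mul_nonneg (sub_nonneg.2 h1) hA0, mul_nonneg hγ.le h2]) hx.1
    linarith
  -- Step 3
  set F : ℝ → ℝ := fun x => (x - v) * (Q x - Q v) - (f x - f v) ^ 2
      - γ ^ 2 / 12 * (x - v) ^ 4 with hFdef
  have hFd : ∀ x ∈ Set.Icc v w, HasDerivAt F (F1 x) x := by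
    intro x hx
    have hx' := hsub hx
    have h1 : HasDerivAt (fun x => (x - v) * (Q x - Q v))
        (1 * (Q x - Q v) + (x - v) * (fu x) ^ 2) x :=
      ((hasDerivAt_id x).sub_const v).mul ((hQu x hx').sub_const (Q v))
    have h2 : HasDerivAt (fun x => (f x - f v) ^ 2)
        ((2 : ℕ) * (f x - f v) ^ 1 * fu x) x :=
      ((hfu x hx').sub_const (f v)).pow 2
    have h3 : HasDerivAt (fun x => γ ^ 2 / 12 * (x - v) ^ 4)
        (γ ^ 2 / 12 * ((4 : ℕ) * (x - v) ^ 3 * 1)) x :=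
      (((hasDerivAt_id x).sub_const v).pow 4).const_mul (γ ^ 2 / 12)
    have := (h1.sub h2).sub h3
    refine this.congr_deriv ?_
    simp only [hF1def]
    push_cast
    ring
  have hFv : F v = 0 := by simp [hFdef]
  have hFw := mono_aux (F := F) (F' := F1) hFd hF1 hvw
  simp only [hFdef] at hFw hFv
  linarith

theorem stmt9
    (α β a b γ : ℝ) (hαβ : α < β) (hab : a < b) (hγ : 0 < γ)
    (f Q fu fuu : ℝ → ℝ → ℝ)
    (hfu : ∀ k ∈ Set.Icc α β, ∀ u ∈ Set.Icc a b, HasDerivAt (fun v => f k v) (fu k u) u)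
    (hfuu : ∀ k ∈ Set.Icc α β, ∀ u ∈ Set.Icc a b, HasDerivAt (fun v => fu k v) (fuu k u) u)
    (hfuuc : ∀ k ∈ Set.Icc α β, ContinuousOn (fun u => fuu k u) (Set.Icc a b))
    (hconv : ∀ k ∈ Set.Icc α β, ∀ u ∈ Set.Icc a b, γ ≤ fuu k u)
    (hQu : ∀ k ∈ Set.Icc α β, ∀ u ∈ Set.Icc a b,
      HasDerivAt (fun v => Q k v) ((fu k u) ^ 2) u) :
    ∀ k ∈ Set.Icc α β, ∀ v ∈ Set.Icc a b, ∀ w ∈ Set.Icc a b,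
      γ ^ 2 / 12 * |w - v| ^ 4
        ≤ (w - v) * (Q k w - Q k v) - (f k w - f k v) ^ 2 := by
  intro k hk v hv w hw
  rcases le_total v w with hvw | hwv
  · rw [abs_of_nonneg (sub_nonneg.2 hvw)]
    exact key a b γ hγ (f k) (Q k) (fu k) (fuu k)
      (hfu k hk) (hfuu k hk) (hconv k hk) (hQu k hk) v w hv hw hvw
  · have h := key a b γ hγ (f k) (Q k) (fu k) (fuu k)
      (hfu k hk) (hfuu k hk) (hconv k hk) (hQu k hk) w v hw hv hwv
    have e1 : |w - v| = v - w := by rw [abs_sub_comm]; exact abs_of_nonneg (sub_nonneg.2 hwv)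
    rw [e1]
    nlinarith [h]
end

section
/- The following discrete interaction identity holds: (1/2)·ΔtΔx·Σ_{n=0}^{N}Σ_{j∈Ω_n}(A_jⁿE_jⁿ − D_jⁿB_jⁿ) = −Δx·Σ_{n=0}^{N}Σ_{j∈Ω′_n} C_{D,j}ⁿ𝒜_jⁿ⁺¹ − Δx·Σ_{n=0}^{N}Σ_{j∈Ω′_n} C_{A,j}ⁿ·½(𝒟_{j−1}ⁿ+𝒟_{j+1}ⁿ) + I^{N+1} − I⁰ + ℰ, where ℰ = (λ/4)ΔtΔxΣ_{n=0}^{N}Σ_{j∈Ω′_n}E_{j−1}ⁿ(B_{j+1}ⁿ−B_{j−1}ⁿ) − (1/4)ΔtΔxΣ_{n=0}^{N}Σ_{j∈Ω′_n}B_{j+1}ⁿ(D_{j+1}ⁿ−D_{j−1}ⁿ) − (1/(4λ))ΔtΔxΣ_{n=0}^{N}Σ_{j∈Ω′_n}(D_{j−1}ⁿ+λE_{j−1}ⁿ)(A_{j+1}ⁿ−A_{j−1}ⁿ) − (1/2)ΔtΔxΣ_{n=0}^{N}Σ_{j∈Ω′_n}E_{j−1}ⁿC_{A,j}ⁿ.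 -/
open MeasureTheory Set

noncomputable def calA (dx : ℝ) (A : ℤ → ℕ → ℝ) (n : ℕ) (l : ℤ) : ℝ :=
  dx * ∑' j : ℤ, (if Even (j + (n : ℤ)) ∧ j ≤ l then A j n else 0)

noncomputable def calD (dx : ℝ) (D : ℤ → ℕ → ℝ) (n : ℕ) (j : ℤ) : ℝ :=
  dx * ∑' l : ℤ, (if Even (l + (n : ℤ)) ∧ j ≤ l then D l n else 0)

noncomputable def interI (dx : ℝ) (A D : ℤ → ℕ → ℝ) (n : ℕ) : ℝ :=
  dx ^ 2 * ∑' p : ℤ × ℤ,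
    (if Even (p.1 + (n : ℤ)) ∧ Even (p.2 + (n : ℤ)) ∧ p.1 ≤ p.2
      then A p.1 n * D p.2 n else 0)

namespace S11

noncomputable def T (J : ℕ) : Finset ℤ := Finset.Icc (-(J:ℤ)-4) ((J:ℤ)+4)

lemma abs_of_not_mem_T {J : ℕ} {j : ℤ} (h : j ∉ T J) : (J:ℤ)+4 < |j| := by
  simp only [T, Finset.mem_Icc, not_and_or, not_le] at h
  rcases abs_cases j with ⟨h1, h2⟩ | ⟨h1, h2⟩ <;> omega

lemma abs_shift {J : ℕ} (j k : ℤ) (hk : |k| ≤ 2) (h : (J:ℤ)+2 < |j|) : (J:ℤ) < |j+k| := by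
  rcases abs_cases j with ⟨h1, h2⟩ | ⟨h1, h2⟩ <;>
    rcases abs_cases (j+k) with ⟨g1, g2⟩ | ⟨g1, g2⟩ <;>
      rcases abs_cases k with ⟨k1, k2⟩ | ⟨k1, k2⟩ <;> omega

lemma tsum_T {J : ℕ} (f : ℤ → ℝ) (hf : ∀ j, (J:ℤ)+2 < |j| → f j = 0) :
    ∑' j, f j = ∑ j ∈ T J, f j :=
  tsum_eq_sum (fun b hb => hf b (by have := abs_of_not_mem_T hb; omega))

lemma shift_T {J : ℕ} (f : ℤ → ℝ) (hf : ∀ j, (J:ℤ)+2 < |j| → f j = 0) (k : ℤ) (hk : |k| ≤ 2) :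
    ∑ j ∈ T J, f (j + k) = ∑ j ∈ T J, f j := by
  have h1 : ∀ j, j ∉ T J → f (j + k) = 0 := by
    intro j hj
    have h2 := abs_of_not_mem_T hj
    apply hf
    have h3 : |j| ≤ |j+k| + |k| := by
      calc |j| = |(j+k) + (-k)| := by ring_nf
        _ ≤ |j+k| + |-k| := abs_add_le _ _
        _ = |j+k| + |k| := by rw [abs_neg]
    omega
  rw [← tsum_eq_sum (L := SummationFilter.unconditional ℤ) h1, ← tsum_eq_sum (L := SummationFilter.unconditional ℤ) (fun j hj => hf j (by have := abs_of_not_mem_T hj; omega))]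
  exact (Equiv.addRight k).tsum_eq f

noncomputable def SO (J : ℕ) (n : ℕ) (f : ℤ → ℝ) : ℝ :=
  ∑ j ∈ T J, (if Odd (j + (n:ℤ)) then f j else 0)

variable {J : ℕ} {dx dt : ℝ} {A B D E CA CD : ℤ → ℕ → ℝ}

lemma calD_fin (hD0 : ∀ m (j : ℤ), (J:ℤ) < |j| → D j m = 0) (m : ℕ) (j : ℤ) :
    calD dx D m j = dx * ∑ l ∈ T J, (if Even (l + (m:ℤ)) ∧ j ≤ l then D l m else 0) := by
  unfold calD
  rw [tsum_T (J := J) _ (fun l hl => by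
    rw [hD0 m l (by omega)]; simp)]

lemma calA_fin (hA0 : ∀ m (j : ℤ), (J:ℤ) < |j| → A j m = 0) (m : ℕ) (j : ℤ) :
    calA dx A m j = dx * ∑ i ∈ T J, (if Even (i + (m:ℤ)) ∧ i ≤ j then A i m else 0) := by
  unfold calA
  rw [tsum_T (J := J) _ (fun i hi => by
    rw [hA0 m i (by omega)]; simp)]

-- the one-step recurrence for calD in space
lemma calD_rec (hD0 : ∀ m (j : ℤ), (J:ℤ) < |j| → D j m = 0) (m : ℕ) (j : ℤ) :
    calD dx D m j = dx * (if Even (j + (m:ℤ)) then D j m else 0) + calD dx D m (j+1) := by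
  rw [calD_fin hD0, calD_fin hD0]
  have key : ∀ l ∈ T J, (if Even (l + (m:ℤ)) ∧ j ≤ l then D l m else 0)
      = (if l = j then (if Even (j + (m:ℤ)) then D j m else 0) else 0)
        + (if Even (l + (m:ℤ)) ∧ j+1 ≤ l then D l m else 0) := by
    intro l _
    rcases eq_or_ne l j with rfl | hl
    · simp
    · simp only [if_neg hl]
      by_cases h1 : Even (l + (m:ℤ)) <;> by_cases h2 : j ≤ l <;> by_cases h3 : j + 1 ≤ l <;>
        simp [h1, h2, h3] <;> omega
  rw [Finset.sum_congr rfl key, Finset.sum_add_distrib, Finset.sum_ite_eq' (T J) j]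
  by_cases hj : j ∈ T J
  · rw [if_pos hj]; ring
  · rw [if_neg hj]
    have : D j m = 0 := hD0 m j (by have := abs_of_not_mem_T hj; omega)
    simp [this]


lemma interI_fin (hA0 : ∀ m (j : ℤ), (J:ℤ) < |j| → A j m = 0)
    (hD0 : ∀ m (j : ℤ), (J:ℤ) < |j| → D j m = 0) (m : ℕ) :
    interI dx A D m
      = dx * ∑ j ∈ T J, (if Even (j + (m:ℤ)) then A j m * calD dx D m j else 0) := by
  unfold interI
  have hzero : ∀ p : ℤ × ℤ, p ∉ T J ×ˢ T J →
      (if Even (p.1 + (m:ℤ)) ∧ Even (p.2 + (m:ℤ)) ∧ p.1 ≤ p.2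
        then A p.1 m * D p.2 m else 0) = 0 := by
    intro p hp
    rw [Finset.mem_product, not_and_or] at hp
    rcases hp with hp | hp
    · rw [hA0 m p.1 (by have := abs_of_not_mem_T hp; omega)]; simp
    · rw [hD0 m p.2 (by have := abs_of_not_mem_T hp; omega)]; simp
  rw [tsum_eq_sum hzero, Finset.sum_product]
  have key : ∀ j ∈ T J, (∑ l ∈ T J,
      if Even (j + (m:ℤ)) ∧ Even (l + (m:ℤ)) ∧ j ≤ l then A j m * D l m else 0)
      = (if Even (j + (m:ℤ)) then A j m
          * (∑ l ∈ T J, if Even (l + (m:ℤ)) ∧ j ≤ l then D l m else 0) else 0) := by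
    intro j _
    by_cases hj : Even (j + (m:ℤ))
    · rw [if_pos hj, Finset.mul_sum]
      refine Finset.sum_congr rfl (fun l _ => ?_)
      by_cases hl : Even (l + (m:ℤ)) ∧ j ≤ l <;> simp [hj, hl]
    · rw [if_neg hj]
      refine Finset.sum_eq_zero (fun l _ => ?_)
      simp [hj]
  rw [Finset.sum_congr rfl key]
  rw [Finset.mul_sum, Finset.mul_sum]
  refine Finset.sum_congr rfl (fun j _ => ?_)
  by_cases hj : Even (j + (m:ℤ))
  · rw [if_pos hj, if_pos hj, calD_fin hD0]; ring
  · simp [hj]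


lemma calD_time (hD0 : ∀ m (j : ℤ), (J:ℤ) < |j| → D j m = 0)
    (hE0 : ∀ m (j : ℤ), (J:ℤ) < |j| → E j m = 0)
    {N n : ℕ} (hn : n ≤ N)
    (hDsch : ∀ n : ℕ, n ≤ N → ∀ j : ℤ, Odd (j + (n : ℤ)) →
      D j (n + 1) - (D (j - 1) n + D (j + 1) n) / 2
        + dt / dx / 2 * (E (j + 1) n - E (j - 1) n) = CD j n)
    (j : ℤ) (hj : Odd (j + (n:ℤ))) :
    calD dx D (n+1) j = (calD dx D n (j-1) + calD dx D n (j+1)) / 2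
      + dx * (dt/dx) / 2 * E (j-1) n
      + dx * (∑ l ∈ T J, if Odd (l + (n:ℤ)) ∧ j ≤ l then CD l n else 0) := by
  have hj' : (j + (n:ℤ)) % 2 = 1 := Int.odd_iff.mp hj
  -- step 1: finite form with parity normalized to level n
  have h1 : calD dx D (n+1) j
      = dx * ∑ l ∈ T J, (if Odd (l + (n:ℤ)) ∧ j ≤ l then D l (n+1) else 0) := by
    rw [calD_fin hD0]
    congr 1
    refine Finset.sum_congr rfl (fun l _ => ?_)
    refine if_congr ?_ rfl rfl
    constructor
    · rintro ⟨he, hle⟩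
      refine ⟨?_, hle⟩
      rw [Int.even_iff] at he; rw [Int.odd_iff]; push_cast at he ⊢; omega
    · rintro ⟨ho, hle⟩
      refine ⟨?_, hle⟩
      rw [Int.odd_iff] at ho; rw [Int.even_iff]; push_cast at ho ⊢; omega
  -- step 2: substitute the scheme pointwise
  have h2 : ∀ l ∈ T J, (if Odd (l + (n:ℤ)) ∧ j ≤ l then D l (n+1) else 0)
      = (1/2) * (if Odd (l + (n:ℤ)) ∧ j ≤ l then D (l-1) n else 0)
        + (1/2) * (if Odd (l + (n:ℤ)) ∧ j ≤ l then D (l+1) n else 0)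
        + (-(dt/dx/2)) * (if Odd (l + (n:ℤ)) ∧ j ≤ l then E (l+1) n else 0)
        + (dt/dx/2) * (if Odd (l + (n:ℤ)) ∧ j ≤ l then E (l-1) n else 0)
        + (if Odd (l + (n:ℤ)) ∧ j ≤ l then CD l n else 0) := by
    intro l _
    by_cases hc : Odd (l + (n:ℤ)) ∧ j ≤ l
    · have hsch : D l (n+1) = (D (l-1) n + D (l+1) n)/2
          - dt/dx/2 * (E (l+1) n - E (l-1) n) + CD l n := by
        have := hDsch n hn l hc.1; linarith
      simp only [if_pos hc, hsch]; ring
    · simp [hc]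
  -- step 3: shifted sums
  have hSDm : ∑ l ∈ T J, (if Even (l + (n:ℤ)) ∧ j - 1 ≤ l then D l n else 0)
      = ∑ l ∈ T J, (if Odd (l + (n:ℤ)) ∧ j ≤ l then D (l-1) n else 0) := by
    rw [← shift_T (J := J) (fun l => if Odd (l + (n:ℤ)) ∧ j ≤ l then D (l-1) n else 0)
      (fun l hl => by have h0 : D (l-1) n = 0 := hD0 n (l-1) (abs_shift l (-1) (by norm_num) hl); simp [h0]) 1 (by norm_num)]
    refine Finset.sum_congr rfl (fun l _ => ?_)
    have e1 : l + 1 - 1 = l := by ring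
    rw [e1]
    refine if_congr ?_ rfl rfl
    rw [Int.even_iff, Int.odd_iff]
    constructor
    · rintro ⟨he, hle⟩; exact ⟨by omega, by omega⟩
    · rintro ⟨ho, hle⟩; exact ⟨by omega, by omega⟩
  have hSDp : ∑ l ∈ T J, (if Even (l + (n:ℤ)) ∧ j + 1 ≤ l then D l n else 0)
      = ∑ l ∈ T J, (if Odd (l + (n:ℤ)) ∧ j ≤ l then D (l+1) n else 0) := by
    rw [← shift_T (J := J) (fun l => if Odd (l + (n:ℤ)) ∧ j ≤ l then D (l+1) n else 0)
      (fun l hl => by have h0 : D (l+1) n = 0 := hD0 n (l+1) (abs_shift l 1 (by norm_num) hl); simp [h0]) (-1) (by norm_num)]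
    refine Finset.sum_congr rfl (fun l _ => ?_)
    have e1 : l + -1 + 1 = l := by ring
    rw [e1]
    refine if_congr ?_ rfl rfl
    rw [Int.even_iff, Int.odd_iff]
    constructor
    · rintro ⟨he, hle⟩; exact ⟨by omega, by omega⟩
    · rintro ⟨ho, hle⟩; exact ⟨by omega, by omega⟩
  have hSEm : ∑ l ∈ T J, (if Even (l + (n:ℤ)) ∧ j - 1 ≤ l then E l n else 0)
      = ∑ l ∈ T J, (if Odd (l + (n:ℤ)) ∧ j ≤ l then E (l-1) n else 0) := by
    rw [← shift_T (J := J) (fun l => if Odd (l + (n:ℤ)) ∧ j ≤ l then E (l-1) n else 0)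
      (fun l hl => by have h0 : E (l-1) n = 0 := hE0 n (l-1) (abs_shift l (-1) (by norm_num) hl); simp [h0]) 1 (by norm_num)]
    refine Finset.sum_congr rfl (fun l _ => ?_)
    have e1 : l + 1 - 1 = l := by ring
    rw [e1]
    refine if_congr ?_ rfl rfl
    rw [Int.even_iff, Int.odd_iff]
    constructor
    · rintro ⟨he, hle⟩; exact ⟨by omega, by omega⟩
    · rintro ⟨ho, hle⟩; exact ⟨by omega, by omega⟩
  have hSEp : ∑ l ∈ T J, (if Even (l + (n:ℤ)) ∧ j + 1 ≤ l then E l n else 0)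
      = ∑ l ∈ T J, (if Odd (l + (n:ℤ)) ∧ j ≤ l then E (l+1) n else 0) := by
    rw [← shift_T (J := J) (fun l => if Odd (l + (n:ℤ)) ∧ j ≤ l then E (l+1) n else 0)
      (fun l hl => by have h0 : E (l+1) n = 0 := hE0 n (l+1) (abs_shift l 1 (by norm_num) hl); simp [h0]) (-1) (by norm_num)]
    refine Finset.sum_congr rfl (fun l _ => ?_)
    have e1 : l + -1 + 1 = l := by ring
    rw [e1]
    refine if_congr ?_ rfl rfl
    rw [Int.even_iff, Int.odd_iff]
    constructor
    · rintro ⟨he, hle⟩; exact ⟨by omega, by omega⟩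
    · rintro ⟨ho, hle⟩; exact ⟨by omega, by omega⟩
  -- step 4: telescope for E
  have htel : ∑ l ∈ T J, (if Even (l + (n:ℤ)) ∧ j - 1 ≤ l then E l n else 0)
      - ∑ l ∈ T J, (if Even (l + (n:ℤ)) ∧ j + 1 ≤ l then E l n else 0) = E (j-1) n := by
    rw [← Finset.sum_sub_distrib]
    have key : ∀ l ∈ T J, (if Even (l + (n:ℤ)) ∧ j - 1 ≤ l then E l n else 0)
        - (if Even (l + (n:ℤ)) ∧ j + 1 ≤ l then E l n else 0)
        = (if l = j - 1 then E (j-1) n else 0) := by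
      intro l _
      rcases eq_or_ne l (j-1) with rfl | hne
      · have hE : Even (j - 1 + (n:ℤ)) := by rw [Int.even_iff]; omega
        simp [hE, show ¬(j + 1 ≤ j - 1) by omega]
      · rw [if_neg hne]
        by_cases h1 : Even (l + (n:ℤ))
        · have h1' := Int.even_iff.mp h1
          by_cases h2 : j + 1 ≤ l
          · simp [h1, h2, show j - 1 ≤ l by omega]
          · have h3 : ¬(j - 1 ≤ l) := by omega
            simp [h1, h2, h3]
        · simp [h1]
    rw [Finset.sum_congr rfl key, Finset.sum_ite_eq' (T J) (j-1)]
    by_cases hjt : j - 1 ∈ T J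
    · rw [if_pos hjt]
    · rw [if_neg hjt]
      exact (hE0 n (j-1) (by have := abs_of_not_mem_T hjt; omega)).symm
  -- assemble
  rw [h1, Finset.sum_congr rfl h2]
  simp only [Finset.sum_add_distrib, ← Finset.mul_sum]
  rw [← hSDm, ← hSDp, ← hSEm, ← hSEp, calD_fin hD0 n (j-1), calD_fin hD0 n (j+1)]
  linear_combination (dx * (dt/dx) / 2) * htel

lemma shift1g (h : ℤ → ℝ) (hh : ∀ m : ℤ, (J:ℤ) < |m| → h m = 0) (n : ℕ) :
    ∑ j ∈ T J, (if Even (j+(n:ℤ)) then h j else 0)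
      = ∑ j ∈ T J, (if Odd (j+(n:ℤ)) then h (j-1) else 0) := by
  rw [← shift_T (J := J) (fun j => if Odd (j+(n:ℤ)) then h (j-1) else 0)
    (fun j hj => by
      have h0 : h (j-1) = 0 := hh (j-1) (by
        rcases abs_cases j with ⟨h1,h2⟩|⟨h1,h2⟩ <;> rcases abs_cases (j-1) with ⟨g1,g2⟩|⟨g1,g2⟩ <;> omega)
      simp [h0]) 1 (by norm_num)]
  refine Finset.sum_congr rfl (fun j _ => ?_)
  rw [show j + 1 - 1 = j from by ring]
  refine if_congr ?_ rfl rfl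
  rw [Int.even_iff, Int.odd_iff]
  omega

lemma shift2g (h : ℤ → ℝ) (hh : ∀ m : ℤ, (J:ℤ) < |m| → h m = 0) (n : ℕ) :
    ∑ j ∈ T J, (if Odd (j+(n:ℤ)) then h (j+1) else 0)
      = ∑ j ∈ T J, (if Odd (j+(n:ℤ)) then h (j-1) else 0) := by
  rw [← shift_T (J := J) (fun j => if Odd (j+(n:ℤ)) then h (j-1) else 0)
    (fun j hj => by
      have h0 : h (j-1) = 0 := hh (j-1) (by
        rcases abs_cases j with ⟨h1,h2⟩|⟨h1,h2⟩ <;> rcases abs_cases (j-1) with ⟨g1,g2⟩|⟨g1,g2⟩ <;> omega)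
      simp [h0]) 2 (by norm_num)]
  refine Finset.sum_congr rfl (fun j _ => ?_)
  rw [show j + 2 - 1 = j + 1 from by ring]
  refine if_congr ?_ rfl rfl
  rw [Int.odd_iff, Int.odd_iff]
  omega

lemma recpair (hD0 : ∀ m (j : ℤ), (J:ℤ) < |j| → D j m = 0) (X : ℤ → ℝ) (n : ℕ) :
    ∑ j ∈ T J, (if Odd (j+(n:ℤ)) then X j * calD dx D n (j-1) else 0)
      = dx * ∑ j ∈ T J, (if Odd (j+(n:ℤ)) then X j * D (j-1) n else 0)
        + ∑ j ∈ T J, (if Odd (j+(n:ℤ)) then X j * calD dx D n (j+1) else 0) := by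
  rw [Finset.mul_sum, ← Finset.sum_add_distrib]
  refine Finset.sum_congr rfl (fun j _ => ?_)
  by_cases hj : Odd (j + (n:ℤ))
  · have hj' := Int.odd_iff.mp hj
    have hev : Even (j - 1 + (n:ℤ)) := by rw [Int.even_iff]; omega
    have hnev : ¬ Even (j + (n:ℤ)) := by rw [Int.even_iff]; omega
    rw [if_pos hj, if_pos hj, if_pos hj, calD_rec hD0 n (j-1), sub_add_cancel,
      calD_rec hD0 n j, if_pos hev, if_neg hnev]
    ring
  · simp [hj]

lemma fub (hA0 : ∀ m (j : ℤ), (J:ℤ) < |j| → A j m = 0)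
    (hCD0 : ∀ m (j : ℤ), (J:ℤ) < |j| → CD j m = 0) (n : ℕ) :
    (∑' j : ℤ, if Odd (j + (n:ℤ)) then CD j n * calA dx A (n+1) j else 0)
      = dx * ∑ j ∈ T J, (if Odd (j + (n:ℤ)) then
          A j (n+1) * ∑ l ∈ T J, (if Odd (l + (n:ℤ)) ∧ j ≤ l then CD l n else 0) else 0) := by
  rw [tsum_T (J := J) _ (fun j hj => by
    have h0 : CD j n = 0 := hCD0 n j (by omega)
    simp [h0])]
  have hcalA : ∀ j : ℤ, calA dx A (n+1) j
      = dx * ∑ i ∈ T J, (if Odd (i + (n:ℤ)) ∧ i ≤ j then A i (n+1) else 0) := by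
    intro j
    rw [calA_fin hA0]
    congr 1
    refine Finset.sum_congr rfl (fun i _ => ?_)
    refine if_congr (and_congr ?_ Iff.rfl) rfl rfl
    rw [Int.even_iff, Int.odd_iff]; push_cast; omega
  have step1 : ∀ j ∈ T J, (if Odd (j + (n:ℤ)) then CD j n * calA dx A (n+1) j else 0)
      = ∑ i ∈ T J, dx * (if Odd (j + (n:ℤ)) ∧ Odd (i + (n:ℤ)) ∧ i ≤ j
          then CD j n * A i (n+1) else 0) := by
    intro j _
    by_cases hj : Odd (j + (n:ℤ))
    · rw [if_pos hj, hcalA j, ← mul_assoc, Finset.mul_sum]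
      refine Finset.sum_congr rfl (fun i _ => ?_)
      by_cases hc : Odd (i + (n:ℤ)) ∧ i ≤ j
      · rw [if_pos hc, if_pos (show Odd (j + (n:ℤ)) ∧ Odd (i + (n:ℤ)) ∧ i ≤ j from ⟨hj, hc.1, hc.2⟩)]
        ring
      · rw [if_neg hc, if_neg (fun h => hc ⟨h.2.1, h.2.2⟩)]
        ring
    · simp [hj]
  rw [Finset.sum_congr rfl step1, Finset.sum_comm, Finset.mul_sum]
  refine Finset.sum_congr rfl (fun i _ => ?_)
  by_cases hi : Odd (i + (n:ℤ))
  · rw [if_pos hi]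
    rw [show dx * (A i (n+1) * ∑ l ∈ T J, (if Odd (l + (n:ℤ)) ∧ i ≤ l then CD l n else 0))
      = ∑ l ∈ T J, dx * (A i (n+1) * (if Odd (l + (n:ℤ)) ∧ i ≤ l then CD l n else 0)) from by
        rw [Finset.mul_sum, Finset.mul_sum]]
    refine Finset.sum_congr rfl (fun l _ => ?_)
    by_cases hc : Odd (l + (n:ℤ)) ∧ i ≤ l
    · rw [if_pos hc, if_pos (show Odd (l + (n:ℤ)) ∧ Odd (i + (n:ℤ)) ∧ i ≤ l from ⟨hc.1, hi, hc.2⟩)]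
      ring
    · rw [if_neg hc, if_neg (fun h => hc ⟨h.1, h.2.2⟩)]
      ring
  · simp [hi]


lemma step (hdx : 0 < dx) (hdt : 0 < dt) {N : ℕ}
    (hsupp : ∀ (n : ℕ) (j : ℤ), (J : ℤ) < |j| →
      A j n = 0 ∧ B j n = 0 ∧ D j n = 0 ∧ E j n = 0 ∧ CA j n = 0 ∧ CD j n = 0)
    (hA : ∀ n : ℕ, n ≤ N → ∀ j : ℤ, Odd (j + (n : ℤ)) →
      A j (n + 1) - (A (j - 1) n + A (j + 1) n) / 2
        + dt / dx / 2 * (B (j + 1) n - B (j - 1) n) = CA j n)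
    (hD : ∀ n : ℕ, n ≤ N → ∀ j : ℤ, Odd (j + (n : ℤ)) →
      D j (n + 1) - (D (j - 1) n + D (j + 1) n) / 2
        + dt / dx / 2 * (E (j + 1) n - E (j - 1) n) = CD j n)
    (n : ℕ) (hn : n ≤ N) :
    1 / 2 * dt * dx * ∑' j : ℤ,
        (if Even (j + (n : ℤ)) then A j n * E j n - D j n * B j n else 0)
      = -(dx * ∑' j : ℤ, (if Odd (j + (n : ℤ)) then CD j n * calA dx A (n + 1) j else 0))
        - dx * ∑' j : ℤ, (if Odd (j + (n : ℤ)) then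
              CA j n * ((calD dx D n (j - 1) + calD dx D n (j + 1)) / 2) else 0)
        + interI dx A D (n + 1) - interI dx A D n
        + (dt / dx / 4 * (dt * dx) * ∑' j : ℤ,
              (if Odd (j + (n : ℤ)) then E (j - 1) n * (B (j + 1) n - B (j - 1) n) else 0)
          - 1 / 4 * (dt * dx) * ∑' j : ℤ,
              (if Odd (j + (n : ℤ)) then B (j + 1) n * (D (j + 1) n - D (j - 1) n) else 0)
          - 1 / (4 * (dt / dx)) * (dt * dx) * ∑' j : ℤ,
              (if Odd (j + (n : ℤ)) then
                (D (j - 1) n + dt / dx * E (j - 1) n) * (A (j + 1) n - A (j - 1) n) else 0)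
          - 1 / 2 * (dt * dx) * ∑' j : ℤ,
              (if Odd (j + (n : ℤ)) then E (j - 1) n * CA j n else 0)) := by
  have hA0 : ∀ m (j : ℤ), (J:ℤ) < |j| → A j m = 0 := fun m j h => (hsupp m j h).1
  have hB0 : ∀ m (j : ℤ), (J:ℤ) < |j| → B j m = 0 := fun m j h => (hsupp m j h).2.1
  have hD0 : ∀ m (j : ℤ), (J:ℤ) < |j| → D j m = 0 := fun m j h => (hsupp m j h).2.2.1
  have hE0 : ∀ m (j : ℤ), (J:ℤ) < |j| → E j m = 0 := fun m j h => (hsupp m j h).2.2.2.1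
  have hCA0 : ∀ m (j : ℤ), (J:ℤ) < |j| → CA j m = 0 := fun m j h => (hsupp m j h).2.2.2.2.1
  have hCD0 : ∀ m (j : ℤ), (J:ℤ) < |j| → CD j m = 0 := fun m j h => (hsupp m j h).2.2.2.2.2
  have habm : ∀ j : ℤ, (J:ℤ)+2 < |j| → (J:ℤ) < |j-1| := fun j h => by
    rcases abs_cases j with ⟨h1,h2⟩|⟨h1,h2⟩ <;> rcases abs_cases (j-1) with ⟨g1,g2⟩|⟨g1,g2⟩ <;> omega
  have habp : ∀ j : ℤ, (J:ℤ)+2 < |j| → (J:ℤ) < |j+1| := fun j h => by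
    rcases abs_cases j with ⟨h1,h2⟩|⟨h1,h2⟩ <;> rcases abs_cases (j+1) with ⟨g1,g2⟩|⟨g1,g2⟩ <;> omega
  -- LHS conversion
  have e1 : (∑' j : ℤ, (if Even (j + (n:ℤ)) then A j n * E j n - D j n * B j n else 0))
      = ∑ j ∈ T J, (if Odd (j + (n:ℤ)) then A (j-1) n * E (j-1) n else 0)
        - ∑ j ∈ T J, (if Odd (j + (n:ℤ)) then B (j-1) n * D (j-1) n else 0) := by
    rw [tsum_T (J := J) _ (fun j hj => by
      have h1 : A j n = 0 := hA0 n j (by omega)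
      have h2 : D j n = 0 := hD0 n j (by omega)
      simp [h1, h2])]
    have t2 : ∑ j ∈ T J, (if Even (j + (n:ℤ)) then A j n * E j n - D j n * B j n else 0)
        = ∑ j ∈ T J, (if Odd (j + (n:ℤ)) then
            A (j-1) n * E (j-1) n - D (j-1) n * B (j-1) n else 0) :=
      shift1g (fun m => A m n * E m n - D m n * B m n)
        (fun m hm => by
          have h1 : A m n = 0 := hA0 n m hm
          have h2 : D m n = 0 := hD0 n m hm
          simp [h1, h2]) n
    rw [t2, ← Finset.sum_sub_distrib]
    exact Finset.sum_congr rfl fun j _ => by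
      by_cases hj : Odd (j + (n:ℤ)) <;> simp [hj] <;> ring
  -- cD term
  have e2 := fub (dx := dx) hA0 hCD0 n
  -- cA term
  have e3 : (∑' j : ℤ, (if Odd (j + (n:ℤ)) then
        CA j n * ((calD dx D n (j - 1) + calD dx D n (j + 1)) / 2) else 0))
      = ∑ j ∈ T J, (if Odd (j + (n:ℤ)) then CA j n * calD dx D n (j+1) else 0)
        + dx/2 * ∑ j ∈ T J, (if Odd (j + (n:ℤ)) then CA j n * D (j-1) n else 0) := by
    rw [tsum_T (J := J) _ (fun j hj => by
      have h1 : CA j n = 0 := hCA0 n j (by omega)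
      simp [h1])]
    have sp : ∑ j ∈ T J, (if Odd (j + (n:ℤ)) then
          CA j n * ((calD dx D n (j - 1) + calD dx D n (j + 1)) / 2) else 0)
        = (1/2) * ∑ j ∈ T J, (if Odd (j + (n:ℤ)) then CA j n * calD dx D n (j-1) else 0)
          + (1/2) * ∑ j ∈ T J, (if Odd (j + (n:ℤ)) then CA j n * calD dx D n (j+1) else 0) := by
      rw [Finset.mul_sum, Finset.mul_sum, ← Finset.sum_add_distrib]
      exact Finset.sum_congr rfl fun j _ => by
        by_cases hj : Odd (j + (n:ℤ)) <;> simp [hj] <;> ring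
    have rp : ∑ j ∈ T J, (if Odd (j + (n:ℤ)) then CA j n * calD dx D n (j-1) else 0)
        = dx * ∑ j ∈ T J, (if Odd (j + (n:ℤ)) then CA j n * D (j-1) n else 0)
          + ∑ j ∈ T J, (if Odd (j + (n:ℤ)) then CA j n * calD dx D n (j+1) else 0) :=
      recpair hD0 (fun j => CA j n) n
    rw [sp, rp]; ring
  -- E-terms
  have e4 : (∑' j : ℤ, (if Odd (j + (n:ℤ)) then E (j - 1) n * (B (j + 1) n - B (j - 1) n) else 0))
      = ∑ j ∈ T J, (if Odd (j + (n:ℤ)) then B (j+1) n * E (j-1) n else 0)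
        - ∑ j ∈ T J, (if Odd (j + (n:ℤ)) then B (j-1) n * E (j-1) n else 0) := by
    rw [tsum_T (J := J) _ (fun j hj => by
      have h1 : E (j-1) n = 0 := hE0 n (j-1) (habm j hj)
      simp [h1]), ← Finset.sum_sub_distrib]
    exact Finset.sum_congr rfl fun j _ => by
      by_cases hj : Odd (j + (n:ℤ)) <;> simp [hj] <;> ring
  have e5 : (∑' j : ℤ, (if Odd (j + (n:ℤ)) then B (j + 1) n * (D (j + 1) n - D (j - 1) n) else 0))
      = ∑ j ∈ T J, (if Odd (j + (n:ℤ)) then B (j+1) n * D (j+1) n else 0)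
        - ∑ j ∈ T J, (if Odd (j + (n:ℤ)) then B (j+1) n * D (j-1) n else 0) := by
    rw [tsum_T (J := J) _ (fun j hj => by
      have h1 : B (j+1) n = 0 := hB0 n (j+1) (habp j hj)
      simp [h1]), ← Finset.sum_sub_distrib]
    exact Finset.sum_congr rfl fun j _ => by
      by_cases hj : Odd (j + (n:ℤ)) <;> simp [hj] <;> ring
  have e6 : (∑' j : ℤ, (if Odd (j + (n:ℤ)) then
        (D (j - 1) n + dt / dx * E (j - 1) n) * (A (j + 1) n - A (j - 1) n) else 0))
      = ∑ j ∈ T J, (if Odd (j + (n:ℤ)) then A (j+1) n * D (j-1) n else 0)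
        + dt/dx * ∑ j ∈ T J, (if Odd (j + (n:ℤ)) then A (j+1) n * E (j-1) n else 0)
        - ∑ j ∈ T J, (if Odd (j + (n:ℤ)) then A (j-1) n * D (j-1) n else 0)
        - dt/dx * ∑ j ∈ T J, (if Odd (j + (n:ℤ)) then A (j-1) n * E (j-1) n else 0) := by
    rw [tsum_T (J := J) _ (fun j hj => by
      have h1 : D (j-1) n = 0 := hD0 n (j-1) (habm j hj)
      have h2 : E (j-1) n = 0 := hE0 n (j-1) (habm j hj)
      simp [h1, h2])]
    have sp : ∀ j ∈ T J, (if Odd (j + (n:ℤ)) then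
          (D (j - 1) n + dt / dx * E (j - 1) n) * (A (j + 1) n - A (j - 1) n) else 0)
        = (if Odd (j + (n:ℤ)) then A (j+1) n * D (j-1) n else 0)
          + (dt/dx) * (if Odd (j + (n:ℤ)) then A (j+1) n * E (j-1) n else 0)
          + (-1) * (if Odd (j + (n:ℤ)) then A (j-1) n * D (j-1) n else 0)
          + (-(dt/dx)) * (if Odd (j + (n:ℤ)) then A (j-1) n * E (j-1) n else 0) := by
      intro j _
      by_cases hj : Odd (j + (n:ℤ)) <;> simp [hj] <;> ring
    rw [Finset.sum_congr rfl sp]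
    simp only [Finset.sum_add_distrib, ← Finset.mul_sum]
    ring
  have e7 : (∑' j : ℤ, (if Odd (j + (n:ℤ)) then E (j - 1) n * CA j n else 0))
      = ∑ j ∈ T J, (if Odd (j + (n:ℤ)) then CA j n * E (j-1) n else 0) := by
    rw [tsum_T (J := J) _ (fun j hj => by
      have h1 : E (j-1) n = 0 := hE0 n (j-1) (habm j hj)
      simp [h1])]
    exact Finset.sum_congr rfl fun j _ => by
      by_cases hj : Odd (j + (n:ℤ)) <;> simp [hj] <;> ring
  -- interI at level n
  have hIn : interI dx A D n
      = dx * (dx * ∑ j ∈ T J, (if Odd (j + (n:ℤ)) then A (j-1) n * D (j-1) n else 0)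
          + ∑ j ∈ T J, (if Odd (j + (n:ℤ)) then A (j-1) n * calD dx D n (j+1) else 0)) := by
    rw [interI_fin hA0 hD0 n]
    have t2 : ∑ j ∈ T J, (if Even (j + (n:ℤ)) then A j n * calD dx D n j else 0)
        = ∑ j ∈ T J, (if Odd (j + (n:ℤ)) then A (j-1) n * calD dx D n (j-1) else 0) :=
      shift1g (fun m => A m n * calD dx D n m)
        (fun m hm => by have h0 : A m n = 0 := hA0 n m hm; simp [h0]) n
    have rp : ∑ j ∈ T J, (if Odd (j + (n:ℤ)) then A (j-1) n * calD dx D n (j-1) else 0)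
        = dx * ∑ j ∈ T J, (if Odd (j + (n:ℤ)) then A (j-1) n * D (j-1) n else 0)
          + ∑ j ∈ T J, (if Odd (j + (n:ℤ)) then A (j-1) n * calD dx D n (j+1) else 0) :=
      recpair hD0 (fun j => A (j-1) n) n
    rw [t2, rp]
  -- interI at level n+1
  have hIn1 : interI dx A D (n+1)
      = dx * ∑ j ∈ T J, (if Odd (j + (n:ℤ)) then A j (n+1) * calD dx D (n+1) j else 0) := by
    rw [interI_fin hA0 hD0 (n+1)]
    congr 1
    refine Finset.sum_congr rfl fun j _ => ?_
    refine if_congr ?_ rfl rfl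
    rw [Int.even_iff, Int.odd_iff]; push_cast; omega
  -- the big expansion of the level-(n+1) sum
  have ebig : ∑ j ∈ T J, (if Odd (j + (n:ℤ)) then A j (n+1) * calD dx D (n+1) j else 0)
      = (1/2) * ∑ j ∈ T J, (if Odd (j + (n:ℤ)) then A (j-1) n * calD dx D n (j+1) else 0)
        + (1/2) * ∑ j ∈ T J, (if Odd (j + (n:ℤ)) then A (j+1) n * calD dx D n (j+1) else 0)
        + (dx/4) * ∑ j ∈ T J, (if Odd (j + (n:ℤ)) then A (j-1) n * D (j-1) n else 0)
        + (dx/4) * ∑ j ∈ T J, (if Odd (j + (n:ℤ)) then A (j+1) n * D (j-1) n else 0)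
        + (dx*(dt/dx)/4) * ∑ j ∈ T J, (if Odd (j + (n:ℤ)) then A (j-1) n * E (j-1) n else 0)
        + (dx*(dt/dx)/4) * ∑ j ∈ T J, (if Odd (j + (n:ℤ)) then A (j+1) n * E (j-1) n else 0)
        + (-(dt/dx/2)) * ∑ j ∈ T J, (if Odd (j + (n:ℤ)) then B (j+1) n * calD dx D n (j+1) else 0)
        + (dt/dx/2) * ∑ j ∈ T J, (if Odd (j + (n:ℤ)) then B (j-1) n * calD dx D n (j+1) else 0)
        + (-(dt/dx*dx/4)) * ∑ j ∈ T J, (if Odd (j + (n:ℤ)) then B (j+1) n * D (j-1) n else 0)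
        + (dt/dx*dx/4) * ∑ j ∈ T J, (if Odd (j + (n:ℤ)) then B (j-1) n * D (j-1) n else 0)
        + (-(dx*(dt/dx)*(dt/dx)/4)) * ∑ j ∈ T J, (if Odd (j + (n:ℤ)) then B (j+1) n * E (j-1) n else 0)
        + (dx*(dt/dx)*(dt/dx)/4) * ∑ j ∈ T J, (if Odd (j + (n:ℤ)) then B (j-1) n * E (j-1) n else 0)
        + ∑ j ∈ T J, (if Odd (j + (n:ℤ)) then CA j n * calD dx D n (j+1) else 0)
        + (dx/2) * ∑ j ∈ T J, (if Odd (j + (n:ℤ)) then CA j n * D (j-1) n else 0)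
        + (dx*(dt/dx)/2) * ∑ j ∈ T J, (if Odd (j + (n:ℤ)) then CA j n * E (j-1) n else 0)
        + dx * ∑ j ∈ T J, (if Odd (j + (n:ℤ)) then
            A j (n+1) * ∑ l ∈ T J, (if Odd (l + (n:ℤ)) ∧ j ≤ l then CD l n else 0) else 0) := by
    have key : ∀ j ∈ T J, (if Odd (j + (n:ℤ)) then A j (n+1) * calD dx D (n+1) j else 0)
        = (1/2) * (if Odd (j + (n:ℤ)) then A (j-1) n * calD dx D n (j+1) else 0)
          + (1/2) * (if Odd (j + (n:ℤ)) then A (j+1) n * calD dx D n (j+1) else 0)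
          + (dx/4) * (if Odd (j + (n:ℤ)) then A (j-1) n * D (j-1) n else 0)
          + (dx/4) * (if Odd (j + (n:ℤ)) then A (j+1) n * D (j-1) n else 0)
          + (dx*(dt/dx)/4) * (if Odd (j + (n:ℤ)) then A (j-1) n * E (j-1) n else 0)
          + (dx*(dt/dx)/4) * (if Odd (j + (n:ℤ)) then A (j+1) n * E (j-1) n else 0)
          + (-(dt/dx/2)) * (if Odd (j + (n:ℤ)) then B (j+1) n * calD dx D n (j+1) else 0)
          + (dt/dx/2) * (if Odd (j + (n:ℤ)) then B (j-1) n * calD dx D n (j+1) else 0)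
          + (-(dt/dx*dx/4)) * (if Odd (j + (n:ℤ)) then B (j+1) n * D (j-1) n else 0)
          + (dt/dx*dx/4) * (if Odd (j + (n:ℤ)) then B (j-1) n * D (j-1) n else 0)
          + (-(dx*(dt/dx)*(dt/dx)/4)) * (if Odd (j + (n:ℤ)) then B (j+1) n * E (j-1) n else 0)
          + (dx*(dt/dx)*(dt/dx)/4) * (if Odd (j + (n:ℤ)) then B (j-1) n * E (j-1) n else 0)
          + (if Odd (j + (n:ℤ)) then CA j n * calD dx D n (j+1) else 0)
          + (dx/2) * (if Odd (j + (n:ℤ)) then CA j n * D (j-1) n else 0)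
          + (dx*(dt/dx)/2) * (if Odd (j + (n:ℤ)) then CA j n * E (j-1) n else 0)
          + dx * (if Odd (j + (n:ℤ)) then
              A j (n+1) * ∑ l ∈ T J, (if Odd (l + (n:ℤ)) ∧ j ≤ l then CD l n else 0) else 0) := by
      intro j _
      by_cases hj : Odd (j + (n:ℤ))
      · have hj' := Int.odd_iff.mp hj
        have hct := calD_time (dt := dt) hD0 hE0 hn hD j hj
        have ha : A j (n+1) = (A (j-1) n + A (j+1) n)/2
            - dt/dx/2*(B (j+1) n - B (j-1) n) + CA j n := by
          have := hA n hn j hj; linarith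
        have hev : Even (j - 1 + (n:ℤ)) := by rw [Int.even_iff]; omega
        have hnev : ¬ Even (j + (n:ℤ)) := by rw [Int.even_iff]; omega
        simp only [if_pos hj]
        rw [hct, calD_rec hD0 n (j-1), sub_add_cancel, calD_rec hD0 n j,
          if_pos hev, if_neg hnev]
        linear_combination (((dx * D (j-1) n + (dx * 0 + calD dx D n (j+1)))
          + (dx * 0 + calD dx D n (j+1)))/2 + dx*(dt/dx)/2 * E (j-1) n) * ha
      · simp [hj]
    rw [Finset.sum_congr rfl key]
    simp only [Finset.sum_add_distrib, ← Finset.mul_sum]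
  -- shift relations
  have r1 : ∑ j ∈ T J, (if Odd (j + (n:ℤ)) then A (j+1) n * calD dx D n (j+1) else 0)
      = dx * ∑ j ∈ T J, (if Odd (j + (n:ℤ)) then A (j-1) n * D (j-1) n else 0)
        + ∑ j ∈ T J, (if Odd (j + (n:ℤ)) then A (j-1) n * calD dx D n (j+1) else 0) := by
    have sh : ∑ j ∈ T J, (if Odd (j + (n:ℤ)) then A (j+1) n * calD dx D n (j+1) else 0)
        = ∑ j ∈ T J, (if Odd (j + (n:ℤ)) then A (j-1) n * calD dx D n (j-1) else 0) :=
      shift2g (fun m => A m n * calD dx D n m)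
        (fun m hm => by have h0 : A m n = 0 := hA0 n m hm; simp [h0]) n
    rw [sh]
    exact recpair hD0 (fun j => A (j-1) n) n
  have r2 : ∑ j ∈ T J, (if Odd (j + (n:ℤ)) then B (j+1) n * calD dx D n (j+1) else 0)
      = dx * ∑ j ∈ T J, (if Odd (j + (n:ℤ)) then B (j-1) n * D (j-1) n else 0)
        + ∑ j ∈ T J, (if Odd (j + (n:ℤ)) then B (j-1) n * calD dx D n (j+1) else 0) := by
    have sh : ∑ j ∈ T J, (if Odd (j + (n:ℤ)) then B (j+1) n * calD dx D n (j+1) else 0)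
        = ∑ j ∈ T J, (if Odd (j + (n:ℤ)) then B (j-1) n * calD dx D n (j-1) else 0) :=
      shift2g (fun m => B m n * calD dx D n m)
        (fun m hm => by have h0 : B m n = 0 := hB0 n m hm; simp [h0]) n
    rw [sh]
    exact recpair hD0 (fun j => B (j-1) n) n
  have r3 : ∑ j ∈ T J, (if Odd (j + (n:ℤ)) then B (j+1) n * D (j+1) n else 0)
      = ∑ j ∈ T J, (if Odd (j + (n:ℤ)) then B (j-1) n * D (j-1) n else 0) :=
    shift2g (fun m => B m n * D m n)
      (fun m hm => by have h0 : B m n = 0 := hB0 n m hm; simp [h0]) n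
  rw [e1, e2, e3, e4, e5, e6, e7, hIn, hIn1, ebig, r1, r2, r3]
  field_simp
  ring

end S11

theorem stmt11 (dx dt : ℝ) (hdx : 0 < dx) (hdt : 0 < dt) (N : ℕ)
    (A B D E CA CD : ℤ → ℕ → ℝ) (J : ℕ)
    (hsupp : ∀ (n : ℕ) (j : ℤ), (J : ℤ) < |j| →
      A j n = 0 ∧ B j n = 0 ∧ D j n = 0 ∧ E j n = 0 ∧ CA j n = 0 ∧ CD j n = 0)
    (hA : ∀ n : ℕ, n ≤ N → ∀ j : ℤ, Odd (j + (n : ℤ)) →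
      A j (n + 1) - (A (j - 1) n + A (j + 1) n) / 2
        + dt / dx / 2 * (B (j + 1) n - B (j - 1) n) = CA j n)
    (hD : ∀ n : ℕ, n ≤ N → ∀ j : ℤ, Odd (j + (n : ℤ)) →
      D j (n + 1) - (D (j - 1) n + D (j + 1) n) / 2
        + dt / dx / 2 * (E (j + 1) n - E (j - 1) n) = CD j n) :
    1 / 2 * dt * dx * ∑ n ∈ Finset.range (N + 1), ∑' j : ℤ,
        (if Even (j + (n : ℤ)) then A j n * E j n - D j n * B j n else 0)
      = -(dx * ∑ n ∈ Finset.range (N + 1), ∑' j : ℤ,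
            (if Odd (j + (n : ℤ)) then CD j n * calA dx A (n + 1) j else 0))
        - dx * ∑ n ∈ Finset.range (N + 1), ∑' j : ℤ,
            (if Odd (j + (n : ℤ)) then
              CA j n * ((calD dx D n (j - 1) + calD dx D n (j + 1)) / 2) else 0)
        + interI dx A D (N + 1) - interI dx A D 0
        + (dt / dx / 4 * (dt * dx) * ∑ n ∈ Finset.range (N + 1), ∑' j : ℤ,
              (if Odd (j + (n : ℤ)) then E (j - 1) n * (B (j + 1) n - B (j - 1) n) else 0)
          - 1 / 4 * (dt * dx) * ∑ n ∈ Finset.range (N + 1), ∑' j : ℤ,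
              (if Odd (j + (n : ℤ)) then B (j + 1) n * (D (j + 1) n - D (j - 1) n) else 0)
          - 1 / (4 * (dt / dx)) * (dt * dx) * ∑ n ∈ Finset.range (N + 1), ∑' j : ℤ,
              (if Odd (j + (n : ℤ)) then
                (D (j - 1) n + dt / dx * E (j - 1) n) * (A (j + 1) n - A (j - 1) n) else 0)
          - 1 / 2 * (dt * dx) * ∑ n ∈ Finset.range (N + 1), ∑' j : ℤ,
              (if Odd (j + (n : ℤ)) then E (j - 1) n * CA j n else 0)) := by
  have hstep : ∀ n ∈ Finset.range (N + 1),
      1 / 2 * dt * dx * ∑' j : ℤ,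
          (if Even (j + (n : ℤ)) then A j n * E j n - D j n * B j n else 0)
        = (-(dx * ∑' j : ℤ, (if Odd (j + (n : ℤ)) then CD j n * calA dx A (n + 1) j else 0)))
          + (-(dx * ∑' j : ℤ, (if Odd (j + (n : ℤ)) then
                CA j n * ((calD dx D n (j - 1) + calD dx D n (j + 1)) / 2) else 0)))
          + (interI dx A D (n + 1) - interI dx A D n)
          + (dt / dx / 4 * (dt * dx) * ∑' j : ℤ,
                (if Odd (j + (n : ℤ)) then E (j - 1) n * (B (j + 1) n - B (j - 1) n) else 0)
              + (-(1 / 4 * (dt * dx) * ∑' j : ℤ,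
                (if Odd (j + (n : ℤ)) then B (j + 1) n * (D (j + 1) n - D (j - 1) n) else 0)))
              + (-(1 / (4 * (dt / dx)) * (dt * dx) * ∑' j : ℤ,
                (if Odd (j + (n : ℤ)) then
                  (D (j - 1) n + dt / dx * E (j - 1) n) * (A (j + 1) n - A (j - 1) n) else 0)))
              + (-(1 / 2 * (dt * dx) * ∑' j : ℤ,
                (if Odd (j + (n : ℤ)) then E (j - 1) n * CA j n else 0)))) := by
    intro n hn
    have h := S11.step hdx hdt hsupp hA hD n (Nat.lt_succ_iff.mp (Finset.mem_range.mp hn))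
    rw [h]; ring
  rw [Finset.mul_sum, Finset.sum_congr rfl hstep]
  simp only [Finset.sum_add_distrib]
  rw [Finset.sum_range_sub (fun k => interI dx A D k)]
  simp only [Finset.sum_neg_distrib, ← Finset.mul_sum]
  ring
end
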